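/- arXiv:2308.10833 — 3 statements merged into one kernel-verified Lean document; each statement's English description precedes it below -/
import Mathlib

section
/- Fix k ≥ 2. There exists a constant C = C(k) > 0 such that every k-uniform hypergraph H with m ≥ 1 edges and no isolated vertices admits a strong coloring with color classes V_1, …, V_t satisfying t ≤ C·√m and ∏_{i=1}^t |V_i| ≤ 2^{C·√m}. -/
open Finset

set_option linter.unusedSectionVars false
set_option linter.unusedVariables false
set_option maxHeartbeats 1000000

section Aux

variable {V : Type} [DecidableEq V]

/-- independence w.r.t. a neighborhood function -/
def IndepW (nbr : V → Finset V) (p : Finset V) : Prop :=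
  ∀ v ∈ p, ∀ w ∈ p, w ∈ nbr v → v = w

lemma IndepW.mono {nbr : V → Finset V} {p q : Finset V} (h : IndepW nbr q) (hpq : p ⊆ q) :
    IndepW nbr p := fun v hv w hw hw' => h v (hpq hv) w (hpq hw) hw'

lemma indepW_singleton (nbr : V → Finset V) (v : V) : IndepW nbr {v} := by
  intro a ha b hb _
  simp only [Finset.mem_singleton] at ha hb
  rw [ha, hb]

/-- greedy independent set -/
lemma greedy_indep (nbr : V → Finset V) (hsym : ∀ v w, v ∈ nbr w → w ∈ nbr v)
    (D : ℕ) :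
    ∀ (n : ℕ) (S : Finset V), S.card ≤ n → (∀ v ∈ S, (nbr v ∩ S).card < D) →
      ∃ I ⊆ S, IndepW nbr I ∧ S.card ≤ D * I.card := by
  intro n
  induction n with
  | zero =>
    intro S hS _
    exact ⟨∅, Finset.empty_subset _, by intro v hv; simp at hv, by omega⟩
  | succ n ih =>
    intro S hS hnb
    rcases S.eq_empty_or_nonempty with rfl | ⟨v, hv⟩
    · exact ⟨∅, Finset.empty_subset _, by intro v hv; simp at hv, by simp⟩
    · have hD : 0 < D := lt_of_le_of_lt (Nat.zero_le _) (hnb v hv)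
      set T : Finset V := insert v (nbr v) with hT
      set S' : Finset V := S \ T with hS'
      have hS'sub : S' ⊆ S := Finset.sdiff_subset
      have hcard' : S.card ≤ S'.card + D := by
        have h1 : S ⊆ S' ∪ (T ∩ S) := by
          intro x hx
          by_cases hxT : x ∈ T
          · exact Finset.mem_union_right _ (Finset.mem_inter.2 ⟨hxT, hx⟩)
          · exact Finset.mem_union_left _ (Finset.mem_sdiff.2 ⟨hx, hxT⟩)
        have h2 : (T ∩ S).card ≤ D := by
          have : T ∩ S ⊆ insert v (nbr v ∩ S) := by
            intro x hx
            rcases Finset.mem_inter.1 hx with ⟨hx1, hx2⟩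
            rcases Finset.mem_insert.1 hx1 with rfl | hx1
            · exact Finset.mem_insert_self _ _
            · exact Finset.mem_insert_of_mem (Finset.mem_inter.2 ⟨hx1, hx2⟩)
          calc (T ∩ S).card ≤ (insert v (nbr v ∩ S)).card := Finset.card_le_card this
            _ ≤ (nbr v ∩ S).card + 1 := Finset.card_insert_le _ _
            _ ≤ D := hnb v hv
        calc S.card ≤ (S' ∪ (T ∩ S)).card := Finset.card_le_card h1
          _ ≤ S'.card + (T ∩ S).card := Finset.card_union_le _ _
          _ ≤ S'.card + D := by omega
      have hlt : S'.card < S.card := by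
        apply Finset.card_lt_card
        constructor
        · exact hS'sub
        · intro hsub
          have : v ∈ S' := hsub hv
          rw [hS'] at this
          exact (Finset.mem_sdiff.1 this).2 (Finset.mem_insert_self _ _)
      obtain ⟨I', hI'sub, hI'ind, hI'card⟩ := ih S' (by omega)
        (fun w hw => lt_of_le_of_lt
          (Finset.card_le_card (Finset.inter_subset_inter (le_refl _) hS'sub)) (hnb w (hS'sub hw)))
      have hvI' : v ∉ I' := by
        intro h
        exact (Finset.mem_sdiff.1 (hI'sub h)).2 (Finset.mem_insert_self _ _)
      refine ⟨insert v I', ?_, ?_, ?_⟩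
      · intro x hx
        rcases Finset.mem_insert.1 hx with rfl | hx
        · exact hv
        · exact hS'sub (hI'sub hx)
      · intro a ha b hb hab
        rcases Finset.mem_insert.1 ha with ha | ha
        · rcases Finset.mem_insert.1 hb with hb | hb
          · rw [ha, hb]
          · exfalso
            have hbT : b ∉ T := (Finset.mem_sdiff.1 (hI'sub hb)).2
            rw [ha] at hab
            exact hbT (Finset.mem_insert_of_mem hab)
        · rcases Finset.mem_insert.1 hb with hb | hb
          · exfalso
            have haT : a ∉ T := (Finset.mem_sdiff.1 (hI'sub ha)).2
            rw [hb] at hab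
            exact haT (Finset.mem_insert_of_mem (hsym _ _ hab))
          · exact hI'ind a ha b hb hab
      · rw [Finset.card_insert_of_notMem hvI']
        have : D * (I'.card + 1) = D * I'.card + D := by ring
        omega

/-- partition into singletons -/
lemma singletons_part (nbr : V → Finset V) (S : Finset V) :
    ∃ L : List (Finset V), L.Pairwise Disjoint ∧
      (∀ p ∈ L, ∃ v ∈ S, p = {v}) ∧
      (∀ v ∈ S, ∃ p ∈ L, v ∈ p) ∧ L.length = S.card := by
  induction S using Finset.induction_on with
  | empty => exact ⟨[], List.Pairwise.nil, by simp, by simp, by simp⟩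
  | @insert a s hnotmem ih =>
    obtain ⟨L, h1, h2, h3, h4⟩ := ih
    refine ⟨{a} :: L, ?_, ?_, ?_, ?_⟩
    · refine List.Pairwise.cons ?_ h1
      intro p hp
      obtain ⟨v, hv, rfl⟩ := h2 p hp
      rw [Finset.disjoint_singleton]
      intro h; rw [h] at hnotmem; exact hnotmem hv
    · intro p hp
      rcases List.mem_cons.1 hp with rfl | hp
      · exact ⟨a, Finset.mem_insert_self _ _, rfl⟩
      · obtain ⟨v, hv, rfl⟩ := h2 p hp
        exact ⟨v, Finset.mem_insert_of_mem hv, rfl⟩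
    · intro v hv
      rcases Finset.mem_insert.1 hv with rfl | hv
      · exact ⟨{v}, List.mem_cons_self, Finset.mem_singleton_self v⟩
      · obtain ⟨p, hp, hvp⟩ := h3 v hv
        exact ⟨p, List.mem_cons_of_mem _ hp, hvp⟩
    · simp [h4, Finset.card_insert_of_notMem hnotmem]


/-- main partition lemma -/

lemma partition_lemma (nbr : V → Finset V) (hsym : ∀ v w, v ∈ nbr w → w ∈ nbr v)
    (D : ℕ) (hD : 1 ≤ D) :
    ∀ (n : ℕ) (S : Finset V) (j i : ℕ), S.card + j ≤ n → i ≤ D →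
      (∀ v ∈ S, (nbr v ∩ S).card < D) → S.card ≤ (D + i) * 2 ^ j →
      ∃ L : List (Finset V), L.Pairwise Disjoint ∧
        (∀ p ∈ L, p ⊆ S ∧ p.Nonempty ∧ p.card ≤ 2 ^ j ∧ IndepW nbr p) ∧
        (∀ v ∈ S, ∃ p ∈ L, v ∈ p) ∧
        L.length ≤ D + 2 * D * j + i := by
  intro n
  induction n with
  | zero =>
    intro S j i hn _ _ _
    have hS : S = ∅ := Finset.card_eq_zero.1 (by omega)
    subst hS
    exact ⟨[], List.Pairwise.nil, by simp, by simp, by simp⟩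
  | succ n ih =>
    intro S j i hn hiD hnb hSc
    by_cases hsmall : S.card ≤ D
    · -- singletons
      obtain ⟨L, h1, h2, h3, h4⟩ := singletons_part nbr S
      refine ⟨L, h1, ?_, h3, by omega⟩
      intro p hp
      obtain ⟨v, hv, rfl⟩ := h2 p hp
      exact ⟨Finset.singleton_subset_iff.2 hv, Finset.singleton_nonempty v,
        by simpa using Nat.one_le_two_pow, indepW_singleton nbr v⟩
    · push_neg at hsmall
      rcases Nat.eq_zero_or_pos i with rfl | hipos
      · -- i = 0 : move to (j-1, D)
        have hj : 1 ≤ j := by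
          by_contra h
          have : j = 0 := by omega
          subst this
          simp at hSc
          omega
        obtain ⟨j', rfl⟩ : ∃ j', j = j' + 1 := ⟨j - 1, by omega⟩
        obtain ⟨L, h1, h2, h3, h4⟩ := ih S j' D (by omega) (le_refl D) hnb
          (by have : (D + D) * 2 ^ j' = (D + 0) * 2 ^ (j' + 1) := by ring
              omega)
        refine ⟨L, h1, ?_, h3, by nlinarith⟩
        intro p hp
        obtain ⟨hs, hne, hc, hi⟩ := h2 p hp
        exact ⟨hs, hne, le_trans hc (Nat.pow_le_pow_right (by norm_num) (by omega)), hi⟩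
      · -- i ≥ 1 : extract one independent part
        obtain ⟨i', rfl⟩ : ∃ i', i = i' + 1 := ⟨i - 1, by omega⟩
        obtain ⟨I₀, hI₀sub, hI₀ind, hI₀card⟩ := greedy_indep nbr hsym D S.card S (le_refl _) hnb
        set c : ℕ := max 1 (S.card - (D + i') * 2 ^ j) with hc
        have hc1 : 1 ≤ c := le_max_left _ _
        have hc2j : c ≤ 2 ^ j := by
          have h2j : 1 ≤ 2 ^ j := Nat.one_le_two_pow
          have : S.card - (D + i') * 2 ^ j ≤ 2 ^ j := by
            have : (D + (i' + 1)) * 2 ^ j = (D + i') * 2 ^ j + 2 ^ j := by ring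
            omega
          omega
        have hcI₀ : c ≤ I₀.card := by
          have hDI : S.card ≤ D * I₀.card := hI₀card
          have hI₀pos : 1 ≤ I₀.card := by
            rcases Nat.eq_zero_or_pos I₀.card with h | h
            · rw [h] at hDI; omega
            · exact h
          rcases le_or_gt (S.card - (D + i') * 2 ^ j) 1 with h | h
          · have : c = 1 := by omega
            omega
          · have hSbig : (D + i') * 2 ^ j < S.card := by omega
            have : D * 2 ^ j ≤ (D + i') * 2 ^ j := by
              apply Nat.mul_le_mul_right; omega
            have h2 : D * 2 ^ j < D * I₀.card := by omega
            have h3 : 2 ^ j < I₀.card := lt_of_mul_lt_mul_left h2 (Nat.zero_le D)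
            omega
        obtain ⟨I, hIsub, hIcard⟩ := Finset.exists_subset_card_eq hcI₀
        have hIS : I ⊆ S := fun x hx => hI₀sub (hIsub hx)
        set S' : Finset V := S \ I with hS'
        have hS'card : S'.card = S.card - c := by
          rw [hS', Finset.card_sdiff_of_subset hIS, hIcard]
        have hS'bound : S'.card ≤ (D + i') * 2 ^ j := by
          rcases le_or_gt S.card ((D + i') * 2 ^ j) with h | h
          · omega
          · have : c = S.card - (D + i') * 2 ^ j := by omega
            omega
        obtain ⟨L', h1, h2, h3, h4⟩ := ih S' j i' (by omega) (by omega)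
          (fun w hw => lt_of_le_of_lt
            (Finset.card_le_card (Finset.inter_subset_inter (le_refl _) Finset.sdiff_subset))
            (hnb w (Finset.sdiff_subset hw)))
          hS'bound
        refine ⟨I :: L', ?_, ?_, ?_, by simp; omega⟩
        · refine List.Pairwise.cons ?_ h1
          intro p hp
          have hpS' : p ⊆ S' := (h2 p hp).1
          exact Finset.disjoint_left.2 fun x hxI hxp =>
            (Finset.mem_sdiff.1 (hpS' hxp)).2 hxI
        · intro p hp
          rcases List.mem_cons.1 hp with rfl | hp
          · exact ⟨hIS, Finset.card_pos.1 (by omega), by omega,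
              IndepW.mono hI₀ind hIsub⟩
          · obtain ⟨hs, hne, hcard, hind⟩ := h2 p hp
            exact ⟨fun x hx => Finset.sdiff_subset (hs hx), hne, hcard, hind⟩
        · intro v hv
          by_cases hvI : v ∈ I
          · exact ⟨I, List.mem_cons_self, hvI⟩
          · obtain ⟨p, hp, hvp⟩ := h3 v (Finset.mem_sdiff.2 ⟨hv, hvI⟩)
            exact ⟨p, List.mem_cons_of_mem _ hp, hvp⟩

end Aux

lemma geom_sum_bound : ∀ n : ℕ,
    ∑ u ∈ Finset.range n, ((8 * u ^ 2 + 30 * u + 28 : ℝ)) * (1 / 2) ^ u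
      ≤ 164 - (16 * n ^ 2 + 92 * n + 164) * (1 / 2) ^ n := by
  intro n
  induction n with
  | zero => norm_num
  | succ n ih =>
    rw [Finset.sum_range_succ]
    have h : ((1 : ℝ) / 2) ^ (n + 1) = (1 / 2) ^ n * (1 / 2) := by ring
    have hpos : (0 : ℝ) < (1 / 2) ^ n := by positivity
    have key : (8 * (n:ℝ) ^ 2 + 30 * n + 28) * (1 / 2) ^ n
        = (16 * (n:ℝ) ^ 2 + 92 * n + 164) * (1 / 2) ^ n
          - (16 * ((n:ℝ)+1) ^ 2 + 92 * ((n:ℝ)+1) + 164) * (1 / 2) ^ (n+1) := by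
      rw [h]; ring
    push_cast
    push_cast at ih
    nlinarith [ih, key]

/-- product of a list of finset cards bounded -/
lemma list_prod_bound {V : Type} (l : List (Finset V)) (B : ℝ) (hB : 0 ≤ B)
    (h : ∀ p ∈ l, ((p.card : ℝ)) ≤ B) :
    0 ≤ (l.map (fun p => ((p.card : ℕ) : ℝ))).prod ∧
      (l.map (fun p => ((p.card : ℕ) : ℝ))).prod ≤ B ^ l.length := by
  induction l with
  | nil => simp
  | cons hd tl ih =>
    obtain ⟨ih1, ih2⟩ := ih (fun p hp => h p (List.mem_cons_of_mem _ hp))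
    have hhd : ((hd.card : ℝ)) ≤ B := h hd (List.mem_cons_self)
    have hhd0 : (0:ℝ) ≤ (hd.card : ℝ) := by positivity
    simp only [List.map_cons, List.prod_cons, List.length_cons]
    constructor
    · exact mul_nonneg hhd0 ih1
    · calc (hd.card : ℝ) * (tl.map (fun p => ((p.card : ℕ) : ℝ))).prod
          ≤ B * B ^ tl.length := mul_le_mul hhd ih2 ih1 hB
        _ = B ^ (tl.length + 1) := by ring

lemma combine_blocks {V : Type} [DecidableEq V] (nbr : V → Finset V)
    (Bl : ℕ → Finset V) (F : ℕ → List (Finset V)) (jf : ℕ → ℕ)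
    (hBdisj : ∀ s s', s ≠ s' → Disjoint (Bl s) (Bl s'))
    (hF : ∀ s, (F s).Pairwise Disjoint ∧
      (∀ p ∈ F s, p ⊆ Bl s ∧ p.Nonempty ∧ p.card ≤ 2 ^ (jf s) ∧ IndepW nbr p) ∧
      (∀ v ∈ Bl s, ∃ p ∈ F s, v ∈ p)) :
    ∀ n : ℕ, ∃ L : List (Finset V), L.Pairwise Disjoint ∧
      (∀ p ∈ L, (∃ s < n, p ⊆ Bl s) ∧ p.Nonempty ∧ IndepW nbr p) ∧
      (∀ s < n, ∀ v ∈ Bl s, ∃ p ∈ L, v ∈ p) ∧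
      L.length = ∑ s ∈ Finset.range n, (F s).length ∧
      0 ≤ (L.map (fun p => ((p.card : ℕ) : ℝ))).prod ∧
      (L.map (fun p => ((p.card : ℕ) : ℝ))).prod
        ≤ (2 : ℝ) ^ (∑ s ∈ Finset.range n, jf s * (F s).length) := by
  intro n
  induction n with
  | zero => exact ⟨[], List.Pairwise.nil, by simp, by simp, by simp, by simp, by simp⟩
  | succ n ih =>
    obtain ⟨L, h1, h2, h3, h4, h5, h6⟩ := ih
    obtain ⟨g1, g2, g3⟩ := hF n
    refine ⟨F n ++ L, ?_, ?_, ?_, ?_, ?_, ?_⟩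
    · rw [List.pairwise_append]
      refine ⟨g1, h1, ?_⟩
      intro p hp q hq
      obtain ⟨s, hs, hq'⟩ := (h2 q hq).1
      have hpB := (g2 p hp).1
      exact Finset.disjoint_of_subset_left hpB
        (Finset.disjoint_of_subset_right hq' (hBdisj n s (by omega)))
    · intro p hp
      rcases List.mem_append.1 hp with hp | hp
      · obtain ⟨ha, hb, _, hd⟩ := g2 p hp
        exact ⟨⟨n, by omega, ha⟩, hb, hd⟩
      · obtain ⟨⟨s, hs, ha⟩, hb, hd⟩ := h2 p hp
        exact ⟨⟨s, by omega, ha⟩, hb, hd⟩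
    · intro s hs v hv
      rcases Nat.lt_succ_iff_lt_or_eq.1 hs with hs | rfl
      · obtain ⟨p, hp, hvp⟩ := h3 s hs v hv
        exact ⟨p, List.mem_append_right _ hp, hvp⟩
      · obtain ⟨p, hp, hvp⟩ := g3 v hv
        exact ⟨p, List.mem_append_left _ hp, hvp⟩
    · rw [List.length_append, Finset.sum_range_succ, h4]; omega
    · rw [List.map_append, List.prod_append]
      obtain ⟨q1, q2⟩ := list_prod_bound (F n) ((2:ℝ) ^ (jf n)) (by positivity)
        (fun p hp => by
          have := (g2 p hp).2.2.1
          calc ((p.card : ℝ)) ≤ ((2 ^ (jf n) : ℕ) : ℝ) := by exact_mod_cast this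
            _ = (2:ℝ) ^ (jf n) := by push_cast; ring)
      exact mul_nonneg q1 h5
    · rw [List.map_append, List.prod_append, Finset.sum_range_succ]
      obtain ⟨q1, q2⟩ := list_prod_bound (F n) ((2:ℝ) ^ (jf n)) (by positivity)
        (fun p hp => by
          have := (g2 p hp).2.2.1
          calc ((p.card : ℝ)) ≤ ((2 ^ (jf n) : ℕ) : ℝ) := by exact_mod_cast this
            _ = (2:ℝ) ^ (jf n) := by push_cast; ring)
      calc (List.map (fun p => ((p.card : ℕ) : ℝ)) (F n)).prod *
            (List.map (fun p => ((p.card : ℕ) : ℝ)) L).prod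
          ≤ ((2:ℝ) ^ (jf n)) ^ (F n).length * (2:ℝ) ^ (∑ s ∈ Finset.range n, jf s * (F s).length) := by
            apply mul_le_mul q2 h6 h5 (by positivity)
        _ = (2:ℝ) ^ (∑ s ∈ Finset.range n, jf s * (F s).length + jf n * (F n).length) := by
            rw [← pow_mul, ← pow_add, Nat.add_comm]



/-- For every `k ≥ 2` there is `C > 0` such that every `k`-uniform hypergraph with
`m ≥ 1` edges and no isolated vertices has a strong coloring (a partition of the
vertex set into classes such that every edge meets each class in at most one vertex)
with `t ≤ C * √m` classes whose sizes have product at most `2 ^ (C * √m)`. -/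
theorem strong_coloring_exists (k : ℕ) (hk : 2 ≤ k) :
    ∃ C : ℝ, 0 < C ∧
      ∀ (V : Type) [Fintype V] [DecidableEq V] (E : Finset (Finset V)) (m : ℕ),
        (∀ e ∈ E, e.card = k) →
        (∀ v : V, ∃ e ∈ E, v ∈ e) →
        E.card = m → 1 ≤ m →
        ∃ (t : ℕ) (W : Fin t → Finset V),
          (∀ i, (W i).Nonempty) ∧
          (∀ i j, i ≠ j → Disjoint (W i) (W j)) ∧
          (∀ v : V, ∃ i, v ∈ W i) ∧
          (∀ e ∈ E, ∀ i, (e ∩ W i).card ≤ 1) ∧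
          (t : ℝ) ≤ C * Real.sqrt m ∧
          (∏ i, ((W i).card : ℝ)) ≤ 2 ^ (C * Real.sqrt m) := by
  refine ⟨330 * k, by positivity, ?_⟩
  intro V _ _ E m hcard hiso hEm hm
  classical
  -- degrees and neighborhoods
  set deg : V → ℕ := fun v => (E.filter (fun e => v ∈ e)).card with hdeg
  set nbr : V → Finset V := fun v => ((E.filter (fun e => v ∈ e)).biUnion id).erase v with hnbr
  have hmem_nbr : ∀ v w : V, w ∈ nbr v ↔ (w ≠ v ∧ ∃ e ∈ E, v ∈ e ∧ w ∈ e) := by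
    intro v w
    simp only [hnbr, Finset.mem_erase, Finset.mem_biUnion, Finset.mem_filter, id]
    constructor
    · rintro ⟨hne, e, ⟨he, hve⟩, hwe⟩
      exact ⟨hne, e, he, hve, hwe⟩
    · rintro ⟨hne, e, he, hve, hwe⟩
      exact ⟨hne, e, ⟨he, hve⟩, hwe⟩
  have hsym : ∀ v w, v ∈ nbr w → w ∈ nbr v := by
    intro v w hv
    rw [hmem_nbr] at hv ⊢
    obtain ⟨hne, e, he, hwe, hve⟩ := hv
    exact ⟨hne.symm, e, he, hve, hwe⟩
  have hdeg1 : ∀ v, 1 ≤ deg v := by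
    intro v
    obtain ⟨e, he, hve⟩ := hiso v
    exact Finset.card_pos.2 ⟨e, Finset.mem_filter.2 ⟨he, hve⟩⟩
  have hsumdeg : ∑ v, deg v = k * m := by
    have h1 : ∀ v : V, deg v = ∑ e ∈ E, if v ∈ e then 1 else 0 := by
      intro v
      rw [hdeg]
      exact Finset.card_filter _ _
    calc ∑ v, deg v = ∑ v : V, ∑ e ∈ E, if v ∈ e then 1 else 0 := by
          exact Finset.sum_congr rfl (fun v _ => h1 v)
      _ = ∑ e ∈ E, ∑ v : V, if v ∈ e then 1 else 0 := Finset.sum_comm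
      _ = ∑ e ∈ E, e.card := by
          refine Finset.sum_congr rfl (fun e _ => ?_)
          rw [← Finset.card_filter]
          congr 1
          ext x
          simp
      _ = ∑ _e ∈ E, k := Finset.sum_congr rfl (fun e he => by rw [hcard e he])
      _ = k * m := by rw [Finset.sum_const, hEm]; ring
  have hnbrcard : ∀ v, (nbr v).card ≤ k * deg v := by
    intro v
    calc (nbr v).card ≤ ((E.filter (fun e => v ∈ e)).biUnion id).card := by
          apply Finset.card_le_card
          rw [hnbr]
          exact Finset.erase_subset _ _
      _ ≤ ∑ e ∈ E.filter (fun e => v ∈ e), (id e).card := Finset.card_biUnion_le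
      _ = ∑ _e ∈ E.filter (fun e => v ∈ e), k := by
          refine Finset.sum_congr rfl (fun e he => ?_)
          exact hcard e (Finset.mem_filter.1 he).1
      _ = deg v * k := by rw [Finset.sum_const, hdeg]; ring
      _ = k * deg v := by ring
  -- parameters
  set b := Nat.sqrt m with hb
  have hb1 : 1 ≤ b := Nat.sqrt_pos.2 hm
  set S₀ := Nat.log 2 b with hS₀
  set Bl : ℕ → Finset V := fun s =>
    Finset.univ.filter (fun v => 2 ^ s ≤ deg v ∧ deg v < 2 ^ (s + 1)) with hBl
  set Hi : Finset V := Finset.univ.filter (fun v => 2 ^ (S₀ + 1) ≤ deg v) with hHi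
  set jf : ℕ → ℕ := fun s => Nat.log 2 (m / 4 ^ s) + 1 with hjf
  have hBdisj : ∀ s s', s ≠ s' → Disjoint (Bl s) (Bl s') := by
    have key : ∀ s s', s < s' → Disjoint (Bl s) (Bl s') := by
      intro s s' hss
      rw [Finset.disjoint_left]
      intro v hv hv'
      have h1 : deg v < 2 ^ (s + 1) := (Finset.mem_filter.1 hv).2.2
      have h2 : 2 ^ s' ≤ deg v := (Finset.mem_filter.1 hv').2.1
      have h3 : (2:ℕ) ^ (s + 1) ≤ 2 ^ s' := Nat.pow_le_pow_right (by norm_num) (by omega)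
      omega
    intro s s' hss
    rcases lt_or_gt_of_ne hss with h | h
    · exact key s s' h
    · exact (key s' s h).symm
  -- block partitions
  have hex : ∀ s, ∃ L : List (Finset V), L.Pairwise Disjoint ∧
      (∀ p ∈ L, p ⊆ Bl s ∧ p.Nonempty ∧ p.card ≤ 2 ^ (jf s) ∧ IndepW nbr p) ∧
      (∀ v ∈ Bl s, ∃ p ∈ L, v ∈ p) ∧
      L.length ≤ k * 2 ^ (s + 1) * (1 + 2 * jf s) := by
    intro s
    set D : ℕ := k * 2 ^ (s + 1) with hD
    have hD1 : 1 ≤ D := by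
      have h2 : 1 ≤ (2:ℕ) ^ (s+1) := Nat.one_le_two_pow
      rw [hD]; nlinarith
    -- degree sum bound for the block
    have hBsum : (Bl s).card * 2 ^ s ≤ k * m := by
      have h1 : (Bl s).card • (2 ^ s) ≤ ∑ v ∈ Bl s, deg v :=
        Finset.card_nsmul_le_sum _ _ _ (fun v hv => (Finset.mem_filter.1 hv).2.1)
      have h2 : ∑ v ∈ Bl s, deg v ≤ ∑ v, deg v :=
        Finset.sum_le_sum_of_subset (Finset.subset_univ _)
      rw [smul_eq_mul] at h1
      omega
    -- m < 4^s * 2^(jf s)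
    have hm4 : m < 4 ^ s * 2 ^ (jf s) := by
      have h1 : m / 4 ^ s < 2 ^ (jf s) := Nat.lt_pow_succ_log_self (by norm_num) _
      have h2 : 4 ^ s * (m / 4 ^ s) + 4 ^ s > m := by
        have := Nat.div_add_mod m (4 ^ s)
        have h4 : 0 < (4:ℕ) ^ s := by positivity
        have := Nat.mod_lt m h4
        omega
      calc m < 4 ^ s * (m / 4 ^ s) + 4 ^ s := h2
        _ = 4 ^ s * (m / 4 ^ s + 1) := by ring
        _ ≤ 4 ^ s * 2 ^ (jf s) := Nat.mul_le_mul_left _ (by omega)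
    -- block size bound
    have hBsize : (Bl s).card ≤ (D + 0) * 2 ^ (jf s) := by
      have h1 : (Bl s).card * 2 ^ s < (k * 2 ^ s * 2 ^ (jf s)) * 2 ^ s := by
        calc (Bl s).card * 2 ^ s ≤ k * m := hBsum
          _ < k * (4 ^ s * 2 ^ (jf s)) := by
              have hk0 : 0 < k := by omega
              exact Nat.mul_lt_mul_of_le_of_lt (le_refl k) hm4 hk0
          _ = (k * 2 ^ s * 2 ^ (jf s)) * 2 ^ s := by
              have : (4:ℕ) ^ s = 2 ^ s * 2 ^ s := by
                rw [← pow_add]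
                have : (4:ℕ) = 2 ^ 2 := by norm_num
                rw [this, ← pow_mul]
                congr 1
                omega
              rw [this]; ring
      have h2 : (Bl s).card < k * 2 ^ s * 2 ^ (jf s) :=
        Nat.lt_of_mul_lt_mul_right h1
      have h3 : k * 2 ^ s * 2 ^ (jf s) ≤ (D + 0) * 2 ^ (jf s) := by
        rw [hD]
        have : k * 2 ^ s ≤ k * 2 ^ (s + 1) :=
          Nat.mul_le_mul_left _ (Nat.pow_le_pow_right (by norm_num) (by omega))
        exact Nat.mul_le_mul_right _ (by omega)
      omega
    -- neighborhood bound in the block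
    have hnb : ∀ v ∈ Bl s, (nbr v ∩ Bl s).card < D := by
      intro v hv
      have h1 : deg v < 2 ^ (s + 1) := (Finset.mem_filter.1 hv).2.2
      calc (nbr v ∩ Bl s).card ≤ (nbr v).card :=
            Finset.card_le_card (Finset.inter_subset_left)
        _ ≤ k * deg v := hnbrcard v
        _ ≤ k * (2 ^ (s + 1) - 1) := Nat.mul_le_mul_left _ (by omega)
        _ < D := by
            rw [hD]
            have h2 : 1 ≤ (2:ℕ) ^ (s+1) := Nat.one_le_two_pow
            have h3 : k * (2 ^ (s + 1) - 1) = k * 2 ^ (s+1) - k * 1 := by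
              rw [← Nat.mul_sub]
            omega
    obtain ⟨L, h1, h2, h3, h4⟩ := partition_lemma nbr hsym D hD1
      ((Bl s).card + jf s) (Bl s) (jf s) 0 (le_refl _) (Nat.zero_le _) hnb hBsize
    exact ⟨L, h1, h2, h3, by rw [hD] at h4 ⊢; nlinarith [h4]⟩
  choose F hF1 hF2 hF3 hF4 using hex
  obtain ⟨Lb, c1, c2, c3, c4, c5, c6⟩ := combine_blocks nbr Bl F jf hBdisj
    (fun s => ⟨hF1 s, hF2 s, hF3 s⟩) (S₀ + 1)
  obtain ⟨Ls, d1, d2, d3, d4⟩ := singletons_part nbr Hi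
  set LL : List (Finset V) := Ls ++ Lb with hLL
  -- numeric facts
  have hsqm1 : (1:ℝ) ≤ Real.sqrt m := by
    rw [show (1:ℝ) = Real.sqrt 1 by simp]
    apply Real.sqrt_le_sqrt
    exact_mod_cast hm
  have hsqm0 : (0:ℝ) < Real.sqrt m := by linarith
  have hbsq : (b:ℝ) ≤ Real.sqrt m := by
    have h1 : ((b:ℝ)) ^ 2 ≤ (m:ℝ) := by
      have h0 : b ^ 2 ≤ m := Nat.sqrt_le' m
      exact_mod_cast h0
    calc (b:ℝ) = Real.sqrt ((b:ℝ)^2) := by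
          rw [Real.sqrt_sq (by positivity)]
      _ ≤ Real.sqrt m := Real.sqrt_le_sqrt h1
  have hbsucc : Real.sqrt m ≤ (b:ℝ) + 1 := by
    have h1 : (m:ℝ) ≤ ((b:ℝ)+1)^2 := by
      have h0 : m < (b+1) ^ 2 := Nat.lt_succ_sqrt' m
      have h2 : (m:ℝ) < ((b:ℝ)+1) ^ 2 := by exact_mod_cast h0
      linarith
    calc Real.sqrt m ≤ Real.sqrt (((b:ℝ)+1)^2) := Real.sqrt_le_sqrt h1
      _ = (b:ℝ) + 1 := Real.sqrt_sq (by positivity)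
  have hbpow : (2:ℕ) ^ S₀ ≤ b := Nat.pow_log_le_self 2 (by omega)
  have hbpow2 : b + 1 ≤ 2 ^ (S₀ + 1) := Nat.lt_pow_succ_log_self (by norm_num) b
  have hpowS : ((2:ℝ)) ^ (S₀ + 1) ≤ 2 * Real.sqrt m := by
    have h1 : ((2:ℕ) ^ S₀ : ℝ) ≤ (b:ℝ) := by exact_mod_cast hbpow
    have h2 : ((2:ℕ)^S₀ : ℝ) = (2:ℝ)^S₀ := by push_cast; ring
    calc ((2:ℝ)) ^ (S₀ + 1) = 2 * (2:ℝ)^S₀ := by ring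
      _ ≤ 2 * (b:ℝ) := by rw [← h2]; linarith
      _ ≤ 2 * Real.sqrt m := by linarith
  -- jf bound
  have hjle : ∀ s, s < S₀ + 1 → jf s ≤ 2 * (S₀ - s) + 3 := by
    intro s hs
    set u := S₀ - s with hu
    by_cases hx : m / 4 ^ s = 0
    · rw [hjf]
      simp only [hx, Nat.log_zero_right]
      omega
    · have hxx : 2 ^ (jf s) ≤ 2 * (m / 4 ^ s) := by
        rw [hjf]
        rw [pow_succ]
        have := Nat.pow_log_le_self 2 hx
        omega
      have h4s : (4:ℕ) ^ s = 2 ^ (2 * s) := by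
        rw [show (4:ℕ) = 2^2 by norm_num, ← pow_mul]
      have hdivmul : 4 ^ s * (m / 4 ^ s) ≤ m := Nat.mul_div_le m (4 ^ s)
      have hmlt : m < 2 ^ (2 * S₀ + 2) := by
        have h1 : m < (b+1) * (b+1) := by
          have := Nat.lt_succ_sqrt' m
          nlinarith [this]
        have h2 : (b+1) * (b+1) ≤ 2 ^ (S₀+1) * 2 ^ (S₀+1) := Nat.mul_le_mul hbpow2 hbpow2
        have h3 : (2:ℕ) ^ (S₀+1) * 2 ^ (S₀+1) = 2 ^ (2 * S₀ + 2) := by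
          rw [← pow_add]; congr 1; omega
        omega
      have key : 2 ^ (2 * s) * 2 ^ (jf s) < 2 ^ (2 * s) * 2 ^ (2 * u + 3) := by
        calc 2 ^ (2*s) * 2 ^ (jf s) ≤ 2 ^ (2*s) * (2 * (m / 4^s)) :=
              Nat.mul_le_mul_left _ hxx
          _ = 2 * (4 ^ s * (m / 4 ^ s)) := by rw [h4s]; ring
          _ ≤ 2 * m := by omega
          _ < 2 * 2 ^ (2 * S₀ + 2) := by omega
          _ = 2 ^ (2 * S₀ + 3) := by rw [pow_succ]; ring
          _ = 2 ^ (2 * s) * 2 ^ (2 * u + 3) := by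
              rw [← pow_add]; congr 1; omega
      have : 2 ^ (jf s) < 2 ^ (2 * u + 3) := by
        have hpos : 0 < (2:ℕ) ^ (2*s) := by positivity
        exact Nat.lt_of_mul_lt_mul_left key
      have := (Nat.pow_lt_pow_iff_right (a := 2) (by norm_num)).1 this
      omega
  -- the central sum bound
  have hsum_key : ((∑ s ∈ Finset.range (S₀+1), (F s).length * (jf s + 1) : ℕ) : ℝ)
      ≤ 328 * k * Real.sqrt m := by
    have hterm : ∀ s ∈ Finset.range (S₀+1),
        (((F s).length * (jf s + 1) : ℕ) : ℝ)
          ≤ (k:ℝ) * 2 ^ (S₀+1) *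
            ((8 * (S₀ - s:ℕ) ^ 2 + 30 * (S₀ - s:ℕ) + 28 : ℝ) * (1/2) ^ (S₀ - s)) := by
      intro s hs
      rw [Finset.mem_range] at hs
      set u := S₀ - s with hu
      have hules : u + (s + 1) = S₀ + 1 := by omega
      have hj : jf s ≤ 2 * u + 3 := hjle s hs
      have h1 : ((F s).length : ℝ) ≤ (k:ℝ) * 2 ^ (s+1) * (1 + 2 * jf s) := by
        have := hF4 s
        have h2 : (((F s).length : ℕ) : ℝ) ≤ ((k * 2 ^ (s+1) * (1 + 2 * jf s) : ℕ) : ℝ) := by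
          exact_mod_cast this
        push_cast at h2 ⊢
        linarith
      have hq : ((1:ℝ) + 2 * jf s) * (jf s + 1)
          ≤ 8 * (u:ℝ)^2 + 30 * u + 28 := by
        have hjr : (jf s : ℝ) ≤ 2 * u + 3 := by exact_mod_cast hj
        have hj0 : (0:ℝ) ≤ (jf s : ℝ) := by positivity
        nlinarith
      have hps : ((2:ℝ)) ^ (s+1) * 2 ^ u = 2 ^ (S₀+1) := by
        rw [← pow_add]
        congr 1
        omega
      have hpu : (0:ℝ) < (2:ℝ) ^ u := by positivity
      have hhalf : ((1:ℝ)/2) ^ u = ((2:ℝ) ^ u)⁻¹ := by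
        rw [div_pow, one_pow, one_div]
      calc (((F s).length * (jf s + 1) : ℕ) : ℝ)
          = ((F s).length : ℝ) * ((jf s : ℝ) + 1) := by push_cast; ring
        _ ≤ ((k:ℝ) * 2 ^ (s+1) * (1 + 2 * jf s)) * ((jf s : ℝ) + 1) := by
            have hj1 : (0:ℝ) ≤ (jf s :ℝ) + 1 := by positivity
            apply mul_le_mul_of_nonneg_right h1 hj1
        _ = (k:ℝ) * 2 ^ (s+1) * ((1 + 2 * (jf s:ℝ)) * (jf s + 1)) := by ring
        _ ≤ (k:ℝ) * 2 ^ (s+1) * (8 * (u:ℝ)^2 + 30 * u + 28) := by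
            apply mul_le_mul_of_nonneg_left hq (by positivity)
        _ = (k:ℝ) * 2 ^ (S₀+1) * ((8 * (u:ℝ)^2 + 30 * u + 28) * (1/2) ^ u) := by
            rw [hhalf, ← hps]
            field_simp
    have hgeom : ∑ s ∈ Finset.range (S₀+1),
        ((8 * (S₀ - s:ℕ) ^ 2 + 30 * (S₀ - s:ℕ) + 28 : ℝ) * (1/2) ^ (S₀ - s)) ≤ 164 := by
      have hrefl := Finset.sum_range_reflect
        (fun u => ((8 * (u:ℕ) ^ 2 + 30 * (u:ℕ) + 28 : ℝ) * (1/2) ^ u)) (S₀+1)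
      have hg := geom_sum_bound (S₀+1)
      have htail : (0:ℝ) ≤ (16 * ((S₀+1):ℝ) ^ 2 + 92 * (S₀+1) + 164) * (1 / 2) ^ (S₀+1) := by
        positivity
      calc ∑ s ∈ Finset.range (S₀+1),
            ((8 * (S₀ - s:ℕ) ^ 2 + 30 * (S₀ - s:ℕ) + 28 : ℝ) * (1/2) ^ (S₀ - s))
          = ∑ u ∈ Finset.range (S₀+1),
            ((8 * (u:ℕ) ^ 2 + 30 * (u:ℕ) + 28 : ℝ) * (1/2) ^ u) := by
            rw [← hrefl]
            apply Finset.sum_congr rfl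
            intro s hs
            have : S₀ + 1 - 1 - s = S₀ - s := by omega
            rw [this]
        _ ≤ 164 - (16 * ((S₀+1):ℝ) ^ 2 + 92 * (S₀+1) + 164) * (1 / 2) ^ (S₀+1) := by
            have := geom_sum_bound (S₀+1)
            push_cast at this ⊢
            linarith
        _ ≤ 164 := by linarith
    calc ((∑ s ∈ Finset.range (S₀+1), (F s).length * (jf s + 1) : ℕ) : ℝ)
        = ∑ s ∈ Finset.range (S₀+1), (((F s).length * (jf s + 1) : ℕ) : ℝ) := by
          push_cast; ring
      _ ≤ ∑ s ∈ Finset.range (S₀+1), (k:ℝ) * 2 ^ (S₀+1) *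
            ((8 * (S₀ - s:ℕ) ^ 2 + 30 * (S₀ - s:ℕ) + 28 : ℝ) * (1/2) ^ (S₀ - s)) :=
          Finset.sum_le_sum hterm
      _ = (k:ℝ) * 2 ^ (S₀+1) * ∑ s ∈ Finset.range (S₀+1),
            ((8 * (S₀ - s:ℕ) ^ 2 + 30 * (S₀ - s:ℕ) + 28 : ℝ) * (1/2) ^ (S₀ - s)) := by
          rw [← Finset.mul_sum]
      _ ≤ (k:ℝ) * 2 ^ (S₀+1) * 164 := by
          apply mul_le_mul_of_nonneg_left hgeom (by positivity)
      _ ≤ (k:ℝ) * (2 * Real.sqrt m) * 164 := by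
          have hk0 : (0:ℝ) ≤ k := by positivity
          nlinarith [hpowS]
      _ = 328 * k * Real.sqrt m := by ring
  have hHicard : (Hi.card : ℝ) ≤ (k:ℝ) * Real.sqrt m := by
    have h1 : Hi.card * 2 ^ (S₀+1) ≤ k * m := by
      have ha : Hi.card • (2 ^ (S₀+1)) ≤ ∑ v ∈ Hi, deg v :=
        Finset.card_nsmul_le_sum _ _ _ (fun v hv => (Finset.mem_filter.1 hv).2)
      have hb2 : ∑ v ∈ Hi, deg v ≤ ∑ v, deg v :=
        Finset.sum_le_sum_of_subset (Finset.subset_univ _)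
      rw [smul_eq_mul] at ha
      omega
    have h2 : Hi.card * (b + 1) ≤ k * m :=
      le_trans (Nat.mul_le_mul_left _ hbpow2) h1
    have h3 : (Hi.card : ℝ) * ((b:ℝ) + 1) ≤ (k:ℝ) * m := by exact_mod_cast h2
    have h4 : Real.sqrt m * Real.sqrt m = m := Real.mul_self_sqrt (by positivity)
    nlinarith [h3, hbsucc, h4, hsqm0, hsqm1,
      (by positivity : (0:ℝ) ≤ (Hi.card : ℝ))]
  refine ⟨LL.length, LL.get, ?_, ?_, ?_, ?_, ?_, ?_⟩
  · -- nonempty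
    intro i
    have hmem : LL.get i ∈ LL := LL.get_mem i
    rcases List.mem_append.1 hmem with h | h
    · obtain ⟨v, _, hv⟩ := d2 _ h
      rw [hv]; exact Finset.singleton_nonempty v
    · exact (c2 _ h).2.1
  · -- disjoint
    have hpw : LL.Pairwise Disjoint := by
      rw [hLL, List.pairwise_append]
      refine ⟨d1, c1, ?_⟩
      intro p hp q hq
      obtain ⟨v, hv, rfl⟩ := d2 p hp
      obtain ⟨s, hs, hq'⟩ := (c2 q hq).1
      rw [Finset.disjoint_singleton_left]
      intro hvq
      have h1 : 2 ^ (S₀ + 1) ≤ deg v := (Finset.mem_filter.1 hv).2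
      have h2 : deg v < 2 ^ (s + 1) := (Finset.mem_filter.1 (hq' hvq)).2.2
      have h3 : (2:ℕ) ^ (s + 1) ≤ 2 ^ (S₀ + 1) := Nat.pow_le_pow_right (by norm_num) (by omega)
      omega
    rw [List.pairwise_iff_getElem] at hpw
    intro i j hij
    rcases lt_trichotomy (i : ℕ) (j : ℕ) with h | h | h
    · exact hpw i j i.isLt j.isLt h
    · exact absurd (Fin.ext h) hij
    · exact (hpw j i j.isLt i.isLt h).symm
  · -- coverage
    intro v
    have hv : ∃ p ∈ LL, v ∈ p := by
      by_cases hhi : 2 ^ (S₀ + 1) ≤ deg v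
      · obtain ⟨p, hp, hvp⟩ := d3 v (Finset.mem_filter.2 ⟨Finset.mem_univ v, hhi⟩)
        exact ⟨p, List.mem_append_left _ hp, hvp⟩
      · push_neg at hhi
        set s := Nat.log 2 (deg v) with hs
        have hd0 : deg v ≠ 0 := by have := hdeg1 v; omega
        have h1 : 2 ^ s ≤ deg v := Nat.pow_log_le_self 2 hd0
        have h2 : deg v < 2 ^ (s + 1) := Nat.lt_pow_succ_log_self (by norm_num) _
        have h3 : s < S₀ + 1 := by
          have : (2:ℕ) ^ s < 2 ^ (S₀ + 1) := lt_of_le_of_lt h1 hhi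
          exact (Nat.pow_lt_pow_iff_right (by norm_num)).1 this
        obtain ⟨p, hp, hvp⟩ := c3 s h3 v (Finset.mem_filter.2 ⟨Finset.mem_univ v, h1, h2⟩)
        exact ⟨p, List.mem_append_right _ hp, hvp⟩
    obtain ⟨p, hp, hvp⟩ := hv
    obtain ⟨i, hi⟩ := List.mem_iff_get.1 hp
    exact ⟨i, by rw [hi]; exact hvp⟩
  · -- edge condition
    intro e he i
    rw [Finset.card_le_one]
    intro a ha b hb
    have hae : a ∈ e := (Finset.mem_inter.1 ha).1
    have hbe : b ∈ e := (Finset.mem_inter.1 hb).1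
    have hap : a ∈ LL.get i := (Finset.mem_inter.1 ha).2
    have hbp : b ∈ LL.get i := (Finset.mem_inter.1 hb).2
    by_contra hab
    have hmem : LL.get i ∈ LL := LL.get_mem i
    have hind : IndepW nbr (LL.get i) := by
      rcases List.mem_append.1 hmem with h | h
      · obtain ⟨v, _, hv⟩ := d2 _ h
        rw [hv]
        intro x hx y hy _
        rw [Finset.mem_singleton] at hx hy
        rw [hx, hy]
      · exact (c2 _ h).2.2
    have : b ∈ nbr a := (hmem_nbr a b).2 ⟨fun h => hab h.symm, e, he, hae, hbe⟩
    exact hab (hind a hap b hbp this)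
  · -- count bound
    have hlen : LL.length = Hi.card + ∑ s ∈ Finset.range (S₀+1), (F s).length := by
      rw [hLL, List.length_append, d4, c4]
    have hnat : ∑ s ∈ Finset.range (S₀+1), (F s).length
        ≤ ∑ s ∈ Finset.range (S₀+1), (F s).length * (jf s + 1) := by
      apply Finset.sum_le_sum
      intro s _
      nlinarith [Nat.zero_le (jf s), Nat.zero_le ((F s).length)]
    have h1 : ((∑ s ∈ Finset.range (S₀+1), (F s).length : ℕ) : ℝ) ≤ 328 * k * Real.sqrt m :=
      le_trans (by exact_mod_cast hnat) hsum_key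
    rw [hlen]
    push_cast
    push_cast at h1 hHicard
    nlinarith [hsqm0]
  · -- product bound
    set f : Finset V → ℝ := fun p => ((p.card : ℕ) : ℝ) with hf
    have hprod_eq : (∏ i, ((LL.get i).card : ℝ)) = (LL.map f).prod := by
      calc (∏ i, ((LL.get i).card : ℝ)) = (List.ofFn (f ∘ LL.get)).prod := by
            rw [List.prod_ofFn]
            rfl
        _ = ((List.ofFn LL.get).map f).prod := by rw [List.map_ofFn]
        _ = (LL.map f).prod := by rw [List.ofFn_get]
    have hsingle : (Ls.map f).prod = 1 := by
      apply List.prod_eq_one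
      intro x hx
      obtain ⟨p, hp, rfl⟩ := List.mem_map.1 hx
      obtain ⟨v, _, rfl⟩ := d2 p hp
      simp [hf]
    have hsplit : (LL.map f).prod = (Lb.map f).prod := by
      rw [hLL, List.map_append, List.prod_append, hsingle, one_mul]
    have hexp : ((∑ s ∈ Finset.range (S₀+1), jf s * (F s).length : ℕ) : ℝ)
        ≤ 330 * k * Real.sqrt m := by
      have hnat : ∑ s ∈ Finset.range (S₀+1), jf s * (F s).length
          ≤ ∑ s ∈ Finset.range (S₀+1), (F s).length * (jf s + 1) := by
        apply Finset.sum_le_sum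
        intro s _
        nlinarith [Nat.zero_le (jf s), Nat.zero_le ((F s).length)]
      have h1 : ((∑ s ∈ Finset.range (S₀+1), jf s * (F s).length : ℕ) : ℝ)
          ≤ 328 * k * Real.sqrt m := le_trans (by exact_mod_cast hnat) hsum_key
      have hk0 : (0:ℝ) ≤ (k:ℝ) := by positivity
      nlinarith [hsqm0, h1]
    calc (∏ i, ((LL.get i).card : ℝ)) = (Lb.map f).prod := by rw [hprod_eq, hsplit]
      _ ≤ (2:ℝ) ^ (∑ s ∈ Finset.range (S₀+1), jf s * (F s).length) := c6
      _ = (2:ℝ) ^ ((∑ s ∈ Finset.range (S₀+1), jf s * (F s).length : ℕ) : ℝ) := by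
          rw [Real.rpow_natCast]
      _ ≤ (2:ℝ) ^ (330 * (k:ℝ) * Real.sqrt m) :=
          Real.rpow_le_rpow_of_exponent_le (by norm_num) hexp
end

section
/- (Erdős–Rado) For all positive integers q and k with k ≥ 2 there is a constant C' = C'(q,k) > 0 such that for every n, the q-color Ramsey number of the complete k-uniform hypergraph on n vertices satisfies r_k(n; q) ≤ tw_k(C'·n). -/
open Finset

/-- The tower function: `tw 1 x = x` and `tw k x = 2 ^ tw (k-1) x` for `k ≥ 2`. -/
noncomputable def tw : ℕ → ℝ → ℝ
  | 0, x => x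
  | 1, x => x
  | (k + 2), x => 2 ^ tw (k + 1) x

/-- The `q`-color Ramsey number of the complete `k`-uniform hypergraph on `n` vertices:
the least `N` such that every `q`-coloring of the finite subsets of `Fin N` admits an
`n`-element set all of whose `k`-element subsets receive the same color. -/
noncomputable def cliqueRamsey (k q n : ℕ) : ℕ :=
  sInf {N : ℕ | ∀ χ : Finset (Fin N) → Fin q,
    ∃ S : Finset (Fin N), S.card = n ∧ ∃ c : Fin q, ∀ e ⊆ S, e.card = k → χ e = c}

lemma tw_succ (k : ℕ) (hk : 1 ≤ k) (x : ℝ) : tw (k + 1) x = 2 ^ tw k x := by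
  obtain ⟨j, rfl⟩ : ∃ j, k = j + 1 := ⟨k - 1, by omega⟩
  rfl

lemma le_two_rpow {s : ℝ} (hs : 0 ≤ s) : s ≤ (2:ℝ) ^ s := by
  rcases le_or_gt s 1 with h | h
  · calc s ≤ 1 := h
    _ = (2:ℝ) ^ (0:ℝ) := by simp
    _ ≤ (2:ℝ) ^ s := Real.rpow_le_rpow_of_exponent_le one_le_two hs
  · have h1 : (2:ℝ) ^ (s - 1) = Real.exp ((s-1) * Real.log 2) := by
      rw [Real.rpow_def_of_pos two_pos]; ring_nf
    have h2 : (s - 1) * Real.log 2 + 1 ≤ Real.exp ((s-1) * Real.log 2) :=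
      Real.add_one_le_exp _
    have hlog : (1:ℝ)/2 ≤ Real.log 2 := by
      have := Real.log_two_gt_d9; linarith
    have h3 : (2:ℝ) ^ s = 2 * (2:ℝ) ^ (s - 1) := by
      rw [← Real.rpow_one_add' (by norm_num) (by intro hc; linarith)]
      ring_nf
    have hpos : (0:ℝ) ≤ s - 1 := by linarith
    nlinarith [h2, h3, h1, mul_le_mul_of_nonneg_left hlog hpos]

lemma tw_mono : ∀ k, Monotone (tw k)
  | 0 => fun _ _ h => h
  | 1 => fun _ _ h => h
  | (k+2) => fun _ _ h =>
      Real.rpow_le_rpow_of_exponent_le one_le_two (tw_mono (k+1) h)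

lemma tw_ge_self (k : ℕ) (hk : 1 ≤ k) {x : ℝ} (hx : 0 ≤ x) : x ≤ tw k x := by
  induction k, hk using Nat.le_induction with
  | base => exact le_refl x
  | succ k hk ih =>
    rw [tw_succ k hk]
    exact le_trans ih (le_two_rpow (le_trans hx ih))

lemma tw_nonneg (k : ℕ) {x : ℝ} (hx : 0 ≤ x) : 0 ≤ tw k x := by
  rcases Nat.eq_zero_or_pos k with rfl | hk
  · exact hx
  · exact le_trans hx (tw_ge_self k hk hx)

/-- Lemma T -/
lemma tw_lin_le (k : ℕ) (hk : 1 ≤ k) :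
    ∀ x p c y : ℝ, 1 ≤ x → 1 ≤ p → 0 ≤ c → p * x + c + k ≤ y →
      c + p * tw k x ≤ tw k y := by
  induction k, hk using Nat.le_induction with
  | base =>
    intro x p c y hx hp hc h
    show c + p * x ≤ y
    push_cast at h; linarith
  | succ k hk ih =>
    intro x p c y hx hp hc h
    rw [tw_succ k hk, tw_succ k hk]
    set t := tw k x with ht
    have htx : x ≤ t := tw_ge_self k hk (by linarith)
    have h2t : (1:ℝ) ≤ 2 ^ t := by
      calc (1:ℝ) = 2 ^ (0:ℝ) := by simp
      _ ≤ 2 ^ t := Real.rpow_le_rpow_of_exponent_le one_le_two (by linarith)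
    have step1 : c + p * 2 ^ t ≤ (c + p) * 2 ^ t := by nlinarith
    have step2 : (c + p) * 2 ^ t ≤ 2 ^ (c + p) * 2 ^ t := by
      have := le_two_rpow (s := c + p) (by linarith)
      nlinarith
    have step3 : (2:ℝ) ^ (c + p) * 2 ^ t = 2 ^ (t + (c + p)) := by
      rw [← Real.rpow_add two_pos]; ring_nf
    have step4 : t + (c + p) ≤ tw k y := by
      have := ih x 1 (c + p) y hx le_rfl (by linarith) (by push_cast at h ⊢; nlinarith)
      linarith
    calc c + p * 2 ^ t ≤ 2 ^ (t + (c + p)) := by rw [← step3]; linarith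
    _ ≤ 2 ^ tw k y := Real.rpow_le_rpow_of_exponent_le one_le_two step4

/-- Lemma P -/
lemma tw_pow_le (k : ℕ) (hk : 1 ≤ k) {x c y : ℝ} (hx : 1 ≤ x) (hc : 1 ≤ c)
    (h : k * c * x + k ≤ y) : c * (tw k x) ^ k ≤ tw k y := by
  rcases Nat.exists_eq_add_of_le hk with ⟨j, rfl⟩
  rcases Nat.eq_zero_or_pos j with rfl | hj
  · show c * (tw 1 x) ^ 1 ≤ tw 1 y
    show c * x ^ 1 ≤ y
    push_cast at h; nlinarith
  · have hk' : 1 ≤ j := hj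
    have hkk : (1 : ℕ) + j = j + 1 := by omega
    rw [hkk] at h ⊢
    rw [tw_succ j hk', tw_succ j hk']
    set t := tw j x with ht
    have htx : x ≤ t := tw_ge_self j hk' (by linarith)
    have hpow : ((2:ℝ) ^ t) ^ (j + 1) = 2 ^ (((j:ℝ) + 1) * t) := by
      rw [← Real.rpow_natCast ((2:ℝ) ^ t) (j+1), ← Real.rpow_mul (by norm_num)]
      push_cast; ring_nf
    have hc2 : c ≤ 2 ^ c := le_two_rpow (by linarith)
    have hj1 : (1:ℝ) ≤ (j:ℝ) := by exact_mod_cast hj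
    have key : ((j:ℝ) + 1) * t + c ≤ tw j y := by
      have := tw_lin_le j hk' x ((j:ℝ)+1) c y hx (by linarith) (by linarith)
        (by push_cast at h ⊢;
            nlinarith [mul_nonneg (mul_nonneg (by linarith : (0:ℝ) ≤ (j:ℝ)+1)
              (by linarith : (0:ℝ) ≤ c - 1)) (by linarith : (0:ℝ) ≤ x - 1),
              mul_nonneg (by linarith : (0:ℝ) ≤ (j:ℝ) - 1) (by linarith : (0:ℝ) ≤ c - 1)])
      linarith
    have h2t : (0:ℝ) < 2 ^ (((j:ℝ)+1) * t) := Real.rpow_pos_of_pos two_pos _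
    calc c * ((2:ℝ) ^ t) ^ (j + 1) = c * 2 ^ (((j:ℝ) + 1) * t) := by rw [hpow]
    _ ≤ 2 ^ c * 2 ^ (((j:ℝ) + 1) * t) := by nlinarith
    _ = 2 ^ (((j:ℝ) + 1) * t + c) := by rw [← Real.rpow_add two_pos]; ring_nf
    _ ≤ 2 ^ tw j y := Real.rpow_le_rpow_of_exponent_le one_le_two key



/-- Ramsey property matching the set in `cliqueRamsey`. -/
def RProp (k q n N : ℕ) : Prop :=
  ∀ χ : Finset (Fin N) → Fin q,
    ∃ S : Finset (Fin N), S.card = n ∧ ∃ c : Fin q, ∀ e ⊆ S, e.card = k → χ e = c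

lemma exists_preimage {α β : Type*} [DecidableEq α] [DecidableEq β] {f : α → β}
    (hf : Function.Injective f) {S : Finset α} {e : Finset β} (he : e ⊆ S.image f) :
    ∃ e' ⊆ S, e'.image f = e ∧ e'.card = e.card := by
  obtain ⟨e', he', rfl⟩ := Finset.subset_image_iff.mp he
  exact ⟨e', he', rfl, (Finset.card_image_of_injective _ hf).symm⟩

lemma RProp_mono {k q n N M : ℕ} (h : RProp k q n N) (hNM : N ≤ M) : RProp k q n M := by
  intro χ
  set f : Fin N → Fin M := Fin.castLE hNM with hf
  have hinj : Function.Injective f := Fin.castLE_injective hNM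
  obtain ⟨S, hS, c, hc⟩ := h (fun s => χ (s.image f))
  refine ⟨S.image f, by rw [Finset.card_image_of_injective _ hinj, hS], c, ?_⟩
  intro e he hek
  obtain ⟨e', he', rfl, hcard⟩ := exists_preimage hinj he
  exact hc e' he' (by omega)

/-- Base case: 1-uniform Ramsey by pigeonhole. -/
lemma RProp_one (q n : ℕ) (hq : 1 ≤ q) (hn : 1 ≤ n) : RProp 1 q n (q * n) := by
  intro χ
  have hcard : (Finset.univ : Finset (Fin q)).card * n ≤ (Finset.univ : Finset (Fin (q*n))).card := by
    simp
  obtain ⟨c, -, hc⟩ := Finset.exists_le_card_fiber_of_mul_le_card_of_maps_to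
    (f := fun a : Fin (q*n) => χ {a}) (fun a _ => Finset.mem_univ _)
    (Finset.univ_nonempty_iff.mpr (Fin.pos_iff_nonempty.mp hq)) hcard
  obtain ⟨S, hSsub, hScard⟩ := Finset.exists_subset_card_eq hc
  refine ⟨S, hScard, c, ?_⟩
  intro e heS he1
  obtain ⟨a, rfl⟩ := Finset.card_eq_one.mp he1
  have := hSsub (heS (Finset.mem_singleton_self a))
  simp only [Finset.mem_filter] at this
  exact this.2

variable {V q : ℕ}

/-- Invariance property of the greedy construction. -/
def Good (s : ℕ) (χ : Finset (Fin V) → Fin q) (L : List (Fin V)) (A : Finset (Fin V)) : Prop :=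
  ∀ j : ℕ, ∀ T : Finset (Fin V), (∀ t ∈ T, t ∈ L.take j) → T.card = s →
    ∀ y y' : Fin V, (y ∈ A ∨ y ∈ L.drop j) → (y' ∈ A ∨ y' ∈ L.drop j) →
      χ (insert y T) = χ (insert y' T)

lemma mem_take_append_singleton {α : Type*} {t x : α} {L : List α} {j : ℕ}
    (h : t ∈ (L ++ [x]).take j) : t ∈ L.take j ∨ t = x := by
  rw [List.take_append, List.mem_append] at h
  rcases h with h | h
  · exact Or.inl h
  · exact Or.inr (by simpa using List.mem_of_mem_take h)

lemma mem_drop_append_singleton {α : Type*} {t x : α} {L : List α} {j : ℕ}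
    (h : t ∈ (L ++ [x]).drop j) : t ∈ L.drop j ∨ t = x := by
  rw [List.drop_append, List.mem_append] at h
  rcases h with h | h
  · exact Or.inl h
  · exact Or.inr (by simpa using List.mem_of_mem_drop h)

lemma greedy_exists (s m : ℕ) (hs : 1 ≤ s) (hq : 1 ≤ q) (χ : Finset (Fin V) → Fin q)
    (hV : (2 * q ^ m ^ (s-1)) ^ m ≤ V) :
    ∀ i ≤ m, ∃ (L : List (Fin V)) (A : Finset (Fin V)),
      L.length = i ∧ L.Nodup ∧ (∀ a ∈ L, a ∉ A) ∧ Good s χ L A ∧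
      (2 * q ^ m ^ (s-1)) ^ (m - i) ≤ A.card := by
  classical
  set D := 2 * q ^ m ^ (s-1) with hD
  have hD2 : 2 ≤ D := by
    have : 1 ≤ q ^ m ^ (s-1) := Nat.one_le_pow _ _ hq
    omega
  intro i
  induction i with
  | zero =>
    intro _
    refine ⟨[], Finset.univ, rfl, List.nodup_nil, by simp, ?_, ?_⟩
    · intro j T hT hcard y y' _ _
      exfalso
      have : T = ∅ := Finset.eq_empty_of_forall_notMem (fun t ht => by simpa using hT t ht)
      rw [this] at hcard
      simp at hcard
      omega
    · simpa using hV
  | succ i ih =>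
    intro hi
    obtain ⟨L, A, hlen, hnodup, hdisj, hGood, hA⟩ := ih (by omega)
    -- pick x ∈ A
    have hApos : 0 < A.card := by
      have h1 : 1 ≤ D ^ (m - i) := Nat.one_le_pow _ _ (by omega)
      omega
    obtain ⟨x, hx⟩ := Finset.card_pos.mp hApos
    have hxL : x ∉ L := fun hmem => hdisj x hmem hx
    -- the splitting function
    set P := L.toFinset.powersetCard (s-1) with hP
    set g : Fin V → ({T // T ∈ P} → Fin q) :=
      fun y => fun T => χ (insert y (insert x T.1)) with hg
    have hcardP : P.card = Nat.choose i (s-1) := by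
      rw [hP, Finset.card_powersetCard, List.toFinset_card_of_nodup hnodup, hlen]
    have hcardβ : Fintype.card ({T // T ∈ P} → Fin q) = q ^ Nat.choose i (s-1) := by
      rw [Fintype.card_fun, Fintype.card_coe, hcardP, Fintype.card_fin]
    have hβle : Fintype.card ({T // T ∈ P} → Fin q) ≤ q ^ m ^ (s-1) := by
      rw [hcardβ]
      apply Nat.pow_le_pow_right hq
      calc Nat.choose i (s-1) ≤ i ^ (s-1) := Nat.choose_le_pow _ _
      _ ≤ m ^ (s-1) := Nat.pow_le_pow_left (by omega) _
    -- pigeonhole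
    have hne : (Finset.univ : Finset ({T // T ∈ P} → Fin q)).Nonempty := by
      have : Nonempty ({T // T ∈ P} → Fin q) := ⟨fun _ => ⟨0, hq⟩⟩
      exact Finset.univ_nonempty
    have hcount : (Finset.univ : Finset ({T // T ∈ P} → Fin q)).card * D ^ (m - (i+1))
        ≤ (A.erase x).card := by
      rw [Finset.card_erase_of_mem hx, Finset.card_univ]
      have h1 : 1 ≤ D ^ (m - (i+1)) := Nat.one_le_pow _ _ (by omega)
      have key : Fintype.card ({T // T ∈ P} → Fin q) * D ^ (m - (i+1)) + D ^ (m - (i+1))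
          ≤ D ^ (m - i) := by
        have : Fintype.card ({T // T ∈ P} → Fin q) * D ^ (m - (i+1)) + D ^ (m - (i+1))
            = (Fintype.card ({T // T ∈ P} → Fin q) + 1) * D ^ (m - (i+1)) := by ring
        rw [this]
        have hmi : m - i = (m - (i+1)) + 1 := by omega
        rw [hmi, pow_succ]
        rw [mul_comm (D ^ (m - (i+1))) D]
        apply Nat.mul_le_mul_right
        have : 1 ≤ q ^ m ^ (s-1) := Nat.one_le_pow _ _ hq
        omega
      omega
    obtain ⟨v, -, hv⟩ := Finset.exists_le_card_fiber_of_mul_le_card_of_maps_to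
      (f := g) (fun a _ => Finset.mem_univ _) hne hcount
    set A' := (A.erase x).filter (fun y => g y = v) with hA'
    refine ⟨L ++ [x], A', by simp [hlen], ?_, ?_, ?_, ?_⟩
    · rw [List.nodup_append]
      exact ⟨hnodup, List.nodup_singleton x, by
        intro a ha b hb; rw [List.mem_singleton] at hb; rw [hb]; rintro rfl; exact hxL ha⟩
    · intro a ha haA'
      have haA : a ∈ A.erase x := (Finset.mem_filter.mp haA').1
      rcases List.mem_append.mp ha with h | h
      · exact hdisj a h (Finset.mem_of_mem_erase haA)
      · simp only [List.mem_singleton] at h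
        subst h
        exact (Finset.notMem_erase a A) haA
    · -- Good
      intro j T hT hcard y y' hy hy'
      by_cases hxT : x ∈ T
      · -- j must exceed L.length
        have hjlarge : L.length < j := by
          by_contra hle
          push_neg at hle
          have := hT x hxT
          rw [List.take_append_of_le_length hle] at this
          exact hxL (List.mem_of_mem_take this)
        have hdrop : (L ++ [x]).drop j = [] := by
          apply List.drop_eq_nil_of_le
          simp
          omega
        rw [hdrop] at hy hy'
        simp only [List.not_mem_nil, or_false] at hy hy'
        have hgy : g y = v := (Finset.mem_filter.mp hy).2
        have hgy' : g y' = v := (Finset.mem_filter.mp hy').2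
        set T' := T.erase x with hT'
        have hT'P : T' ∈ P := by
          rw [hP, Finset.mem_powersetCard]
          constructor
          · intro t ht
            have htT := Finset.mem_of_mem_erase ht
            have htx : t ≠ x := Finset.ne_of_mem_erase ht
            have := hT t htT
            rcases mem_take_append_singleton this with h | h
            · exact List.mem_toFinset.mpr (List.mem_of_mem_take h)
            · exact absurd h htx
          · rw [Finset.card_erase_of_mem hxT, hcard]
        have hins : insert x T' = T := Finset.insert_erase hxT
        have e1 : χ (insert y T) = g y ⟨T', hT'P⟩ := by rw [hg]; simp only; rw [hins]
        have e2 : χ (insert y' T) = g y' ⟨T', hT'P⟩ := by rw [hg]; simp only; rw [hins]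
        rw [e1, e2, hgy, hgy']
      · -- x ∉ T : use old invariant
        apply hGood j T ?_ hcard y y' ?_ ?_
        · intro t ht
          rcases mem_take_append_singleton (hT t ht) with h | h
          · exact h
          · exact absurd (h ▸ ht) hxT
        · rcases hy with h | h
          · exact Or.inl (Finset.mem_of_mem_erase (Finset.mem_filter.mp h).1)
          · rcases mem_drop_append_singleton h with h | h
            · exact Or.inr h
            · exact Or.inl (h ▸ hx)
        · rcases hy' with h | h
          · exact Or.inl (Finset.mem_of_mem_erase (Finset.mem_filter.mp h).1)
          · rcases mem_drop_append_singleton h with h | h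
            · exact Or.inr h
            · exact Or.inl (h ▸ hx)
    · exact hv

lemma RProp_step (s n m : ℕ) (hs : 1 ≤ s) (hq : 1 ≤ q)
    (h : RProp s q n m) : RProp (s+1) q n ((2 * q ^ m ^ (s-1)) ^ m) := by
  classical
  intro χ
  obtain ⟨L, A, hlen, hnodup, hdisj, hGood, hA⟩ :=
    greedy_exists s m hs hq χ (by simp) m le_rfl
  have hApos : 0 < A.card := by
    have : 1 ≤ (2 * q ^ m ^ (s-1)) ^ (m - m) := Nat.one_le_pow _ _ (by positivity)
    omega
  obtain ⟨y₀, hy₀⟩ := Finset.card_pos.mp hApos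
  set φ : Fin m → Fin ((2 * q ^ m ^ (s-1)) ^ m) :=
    fun b => L[(b : ℕ)]'(by rw [hlen]; exact b.isLt) with hφ
  have hφinj : Function.Injective φ := by
    intro a b hab
    have hinj := List.nodup_iff_injective_getElem.mp hnodup
    have := hinj (a₁ := ⟨a, by rw [hlen]; exact a.isLt⟩) (a₂ := ⟨b, by rw [hlen]; exact b.isLt⟩) hab
    simpa [Fin.ext_iff] using this
  obtain ⟨S'', hS''card, c, hc⟩ := h (fun t => χ (insert y₀ (t.image φ)))
  refine ⟨S''.image φ, by rw [Finset.card_image_of_injective _ hφinj, hS''card], c, ?_⟩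
  intro e he hek
  obtain ⟨e'', he''S, rfl, he''card⟩ := exists_preimage hφinj he
  rw [hek] at he''card
  have hne : e''.Nonempty := Finset.card_pos.mp (by omega)
  set j₀ := e''.max' hne with hj₀
  have hj₀e : j₀ ∈ e'' := e''.max'_mem hne
  set T'' := e''.erase j₀ with hT''
  have hT''card : T''.card = s := by rw [hT'', Finset.card_erase_of_mem hj₀e]; omega
  have himg : (insert j₀ T'').image φ = e''.image φ := by
    rw [hT'', Finset.insert_erase hj₀e]
  have key : χ (e''.image φ) = χ (insert y₀ (T''.image φ)) := by
    rw [← himg, Finset.image_insert]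
    apply hGood (j₀ : ℕ) (T''.image φ) ?_ ?_ (φ j₀) y₀ ?_ (Or.inl hy₀)
    · intro t ht
      obtain ⟨b, hb, rfl⟩ := Finset.mem_image.mp ht
      have hbj : (b : ℕ) < (j₀ : ℕ) := by
        have hble : b ≤ j₀ := e''.le_max' b (Finset.mem_of_mem_erase hb)
        have hbne : b ≠ j₀ := Finset.ne_of_mem_erase hb
        exact lt_of_le_of_ne hble (by simpa [Fin.ext_iff] using hbne)
      have hblt : (b : ℕ) < (L.take (j₀ : ℕ)).length := by
        rw [List.length_take, hlen]
        exact lt_min hbj b.isLt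
      have : φ b = (L.take (j₀ : ℕ))[(b : ℕ)]'hblt := by
        rw [List.getElem_take]
      rw [this]
      exact List.getElem_mem _
    · rw [Finset.card_image_of_injective _ hφinj, hT''card]
    · right
      have hlt : 0 < (L.drop (j₀ : ℕ)).length := by
        rw [List.length_drop, hlen]
        have := j₀.isLt
        omega
      have : φ j₀ = (L.drop (j₀ : ℕ))[0]'hlt := by
        rw [List.getElem_drop]; simp [hφ]
      rw [this]
      exact List.getElem_mem _
  rw [key]
  exact hc T'' (le_trans (Finset.erase_subset _ _) he''S) hT''card


lemma main_induction (q : ℕ) (hq : 1 ≤ q) :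
    ∀ k, 1 ≤ k → ∃ C : ℝ, 1 ≤ C ∧ ∀ n, 1 ≤ n →
      ∃ N : ℕ, RProp k q n N ∧ (N : ℝ) ≤ tw k (C * n) := by
  intro k hk
  induction k, hk using Nat.le_induction with
  | base =>
    refine ⟨q, by exact_mod_cast hq, fun n hn => ⟨q * n, RProp_one q n hq hn, ?_⟩⟩
    show ((q * n : ℕ) : ℝ) ≤ (q : ℝ) * n
    push_cast
    exact le_rfl
  | succ k hk ih =>
    obtain ⟨C, hC, hN⟩ := ih
    have hk1 : (1:ℝ) ≤ (k:ℝ) := by exact_mod_cast hk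
    have hq1 : (1:ℝ) ≤ (q:ℝ) := by exact_mod_cast hq
    have hprod : (0:ℝ) ≤ 2 * k * q * C := by positivity
    refine ⟨2 * k * q * C + k, by linarith, fun n hn => ?_⟩
    obtain ⟨m, hRm, hmle⟩ := hN n hn
    refine ⟨(2 * q ^ m ^ (k-1)) ^ m, RProp_step k n m hk hq hRm, ?_⟩
    have hn1 : (1:ℝ) ≤ (n:ℝ) := by exact_mod_cast hn
    -- natural number estimates
    have nat1 : (2 * q ^ m ^ (k-1)) ^ m ≤ (2 * q) ^ m ^ k := by
      have e1 : (2 * q ^ m ^ (k-1)) ^ m = 2 ^ m * q ^ (m ^ k) := by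
        rw [mul_pow, ← pow_mul, ← pow_succ, Nat.sub_add_cancel hk]
      rw [e1, mul_pow]
      exact Nat.mul_le_mul (Nat.pow_le_pow_right (by norm_num)
        (Nat.le_self_pow (by omega) m)) le_rfl
    have nat2 : (2 * q) ^ m ^ k ≤ 2 ^ (2 * q * m ^ k) := by
      calc (2 * q) ^ m ^ k ≤ (2 ^ (2 * q)) ^ m ^ k :=
            Nat.pow_le_pow_left (le_of_lt Nat.lt_two_pow_self) _
      _ = 2 ^ (2 * q * m ^ k) := by rw [← pow_mul]
    -- real side
    have hrpow : ((2 ^ (2 * q * m ^ k) : ℕ) : ℝ) = (2:ℝ) ^ ((2 * q * m ^ k : ℕ) : ℝ) := by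
      rw [Real.rpow_natCast]; push_cast; ring
    have hexp : ((2 * q * m ^ k : ℕ) : ℝ) ≤ tw k ((2 * k * q * C + k) * n) := by
      push_cast
      have hmt : (m : ℝ) ≤ tw k (C * n) := hmle
      have ht0 : (0:ℝ) ≤ tw k (C * n) := le_trans (Nat.cast_nonneg m) hmt
      have hpk : ((m:ℝ)) ^ k ≤ (tw k (C * n)) ^ k :=
        pow_le_pow_left₀ (Nat.cast_nonneg m) hmt k
      have happ : (2 * (q:ℝ)) * (tw k (C * n)) ^ k ≤ tw k ((2 * k * q * C + k) * n) := by
        apply tw_pow_le k hk (x := C * n) (c := 2 * (q:ℝ))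
        · nlinarith
        · nlinarith
        · push_cast
          nlinarith
      nlinarith
    calc ((( 2 * q ^ m ^ (k-1)) ^ m : ℕ) : ℝ) ≤ ((2 ^ (2 * q * m ^ k) : ℕ) : ℝ) := by
          exact_mod_cast le_trans nat1 nat2
    _ = (2:ℝ) ^ ((2 * q * m ^ k : ℕ) : ℝ) := hrpow
    _ ≤ (2:ℝ) ^ tw k ((2 * k * q * C + k) * n) :=
          Real.rpow_le_rpow_of_exponent_le one_le_two hexp
    _ = tw (k+1) ((2 * k * q * C + k) * n) := (tw_succ k hk _).symm

/-- Erdős–Rado: for all `q ≥ 1` and `k ≥ 2` there is `C' > 0` such that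
`r_k(n; q) ≤ tw k (C' * n)` for every `n`. -/
theorem erdos_rado (q k : ℕ) (hq : 1 ≤ q) (hk : 2 ≤ k) :
    ∃ C' : ℝ, 0 < C' ∧ ∀ n : ℕ, (cliqueRamsey k q n : ℝ) ≤ tw k (C' * n) := by
  obtain ⟨C, hC, hN⟩ := main_induction q hq k (by omega)
  refine ⟨C, by linarith, fun n => ?_⟩
  rcases Nat.eq_zero_or_pos n with rfl | hn
  · have h0 : cliqueRamsey k q 0 = 0 := by
      apply Nat.le_zero.mp
      apply Nat.sInf_le
      intro χ
      refine ⟨∅, Finset.card_empty, ⟨0, hq⟩, ?_⟩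
      intro e he hek
      have : e = ∅ := Finset.subset_empty.mp he
      rw [this] at hek
      simp at hek
      omega
    rw [h0]
    obtain ⟨j, rfl⟩ : ∃ j, k = j + 2 := ⟨k - 2, by omega⟩
    rw [Nat.cast_zero]
    rw [show tw (j+2) (C * 0) = 2 ^ tw (j+1) (C * 0) from rfl]
    exact le_of_lt (Real.rpow_pos_of_pos two_pos _)
  · obtain ⟨N, hR, hle⟩ := hN n hn
    have hmem : cliqueRamsey k q n ≤ N := Nat.sInf_le hR
    calc ((cliqueRamsey k q n : ℕ) : ℝ) ≤ (N : ℝ) := by exact_mod_cast hmem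
    _ ≤ tw k (C * n) := hle
end

section
/- Let k ≥ 2, q ≥ 1 and t ≥ k be integers, let R = r_k(t; q), and let N ≥ R. Then for every coloring of the k-element subsets of an N-element set V with q colors, there exists a color c such that the number of t-element subsets S ⊆ V all of whose k-element subsets receive color c is at least binom(N, R) / (q · binom(N − t, R − t)). -/
open Finset

private abbrev RP (k q n N : ℕ) : Prop := ∀ χ : Finset (Fin N) → Fin q,
  ∃ S : Finset (Fin N), S.card = n ∧ ∃ c : Fin q, ∀ e ⊆ S, e.card = k → χ e = c

private lemma choose_le_two_pow (n k : ℕ) : n.choose k ≤ 2 ^ n := by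
  rcases le_or_gt k n with h | h
  · calc n.choose k ≤ ∑ m ∈ range (n + 1), n.choose m :=
        Finset.single_le_sum (fun i _ => Nat.zero_le _) (mem_range.2 (by omega))
    _ = 2 ^ n := Nat.sum_range_choose n
  · simp [Nat.choose_eq_zero_of_lt h]

private lemma step_ex (k : ℕ) {q N : ℕ} (χ : Finset (Fin N) → Fin q)
    (P A : Finset (Fin N)) (hA : A.Nonempty) :
    ∃ B : Finset (Fin N), B ⊆ A.erase (A.min' hA) ∧
      (∀ y ∈ B, ∀ z ∈ B, ∀ e ⊆ insert (A.min' hA) P, e.card = k →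
        χ (insert y e) = χ (insert z e)) ∧
      (A.card - 1) / 2 ^ ((insert (A.min' hA) P).card.choose k * q) ≤ B.card := by
  classical
  set P' := insert (A.min' hA) P with hP'
  set s := A.erase (A.min' hA) with hs
  set pc := P'.powersetCard k with hpc
  set F : Fin N → Finset (Finset (Fin N) × Fin q) :=
    fun y => pc.image (fun e => (e, χ (insert y e))) with hF
  set t : Finset (Finset (Finset (Fin N) × Fin q)) := (pc ×ˢ (univ : Finset (Fin q))).powerset
    with ht
  have hmaps : ∀ y ∈ s, F y ∈ t := by
    intro y _
    rw [ht, mem_powerset]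
    intro p hp
    rw [hF, mem_image] at hp
    obtain ⟨e, he, rfl⟩ := hp
    exact mem_product.2 ⟨he, mem_univ _⟩
  have htne : t.Nonempty := ⟨∅, mem_powerset.2 (empty_subset _)⟩
  have htcard : t.card = 2 ^ (P'.card.choose k * q) := by
    rw [ht, card_powerset, card_product, card_univ, Fintype.card_fin, hpc, card_powersetCard]
  have hscard : s.card = A.card - 1 := card_erase_of_mem (A.min'_mem hA)
  obtain ⟨b, _, hb⟩ := exists_le_card_fiber_of_mul_le_card_of_maps_to hmaps htne
    (n := s.card / t.card) (Nat.mul_div_le _ _)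
  refine ⟨s.filter (fun y => F y = b), filter_subset _ _, ?_, ?_⟩
  · intro y hy z hz e heP hek
    have hye : (e, χ (insert y e)) ∈ F y :=
      mem_image.2 ⟨e, mem_powersetCard.2 ⟨heP, hek⟩, rfl⟩
    rw [(mem_filter.1 hy).2, ← (mem_filter.1 hz).2, hF, mem_image] at hye
    obtain ⟨e', _, he'⟩ := hye
    obtain ⟨rfl, h2⟩ := Prod.mk.injEq .. ▸ he'
    exact h2.symm
  · rw [← htcard, ← hscard]; exact hb
private noncomputable def states (k : ℕ) {q N : ℕ} (χ : Finset (Fin N) → Fin q) :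
    ℕ → Finset (Fin N) × Finset (Fin N)
  | 0 => (∅, Finset.univ)
  | (i+1) =>
      let PA := states k χ i
      if hA : PA.2.Nonempty then
        (insert (PA.2.min' hA) PA.1, Classical.choose (step_ex k χ PA.1 PA.2 hA))
      else (PA.1, ∅)

private lemma states_succ (k : ℕ) {q N : ℕ} (χ : Finset (Fin N) → Fin q) (i : ℕ)
    (hA : (states k χ i).2.Nonempty) :
    (states k χ (i+1)).1 = insert ((states k χ i).2.min' hA) (states k χ i).1 ∧
    (states k χ (i+1)).2 ⊆ (states k χ i).2.erase ((states k χ i).2.min' hA) ∧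
    (∀ y ∈ (states k χ (i+1)).2, ∀ z ∈ (states k χ (i+1)).2,
      ∀ e ⊆ insert ((states k χ i).2.min' hA) (states k χ i).1, e.card = k →
        χ (insert y e) = χ (insert z e)) ∧
    ((states k χ i).2.card - 1) /
        2 ^ ((insert ((states k χ i).2.min' hA) (states k χ i).1).card.choose k * q)
      ≤ (states k χ (i+1)).2.card := by
  have h := Classical.choose_spec (step_ex k χ (states k χ i).1 (states k χ i).2 hA)
  rw [states, dif_pos hA]
  exact ⟨rfl, h.1, h.2.1, h.2.2⟩

private lemma states_chain (k : ℕ) {q N : ℕ} (χ : Finset (Fin N) → Fin q) (i : ℕ) :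
    (states k χ (i+1)).2 ⊆ (states k χ i).2 := by
  by_cases hA : (states k χ i).2.Nonempty
  · exact (states_succ k χ i hA).2.1.trans (erase_subset _ _)
  · rw [states, dif_neg hA]; exact empty_subset _

private lemma states_chain' (k : ℕ) {q N : ℕ} (χ : Finset (Fin N) → Fin q) {i j : ℕ}
    (hij : i ≤ j) : (states k χ j).2 ⊆ (states k χ i).2 := by
  induction j, hij using Nat.le_induction with
  | base => exact Subset.rfl
  | succ j hij ih => exact (states_chain k χ j).trans ih

private lemma rp_transfer {k q n N : ℕ} (h : RP k q n N) {α : Type*} [DecidableEq α]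
    (T : Finset α) (hT : T.card = N) (χ : Finset α → Fin q) :
    ∃ S : Finset α, S ⊆ T ∧ S.card = n ∧ ∃ c : Fin q, ∀ e ⊆ S, e.card = k → χ e = c := by
  classical
  set f : Fin N → α := fun i => (T.equivFin.symm (Fin.cast hT.symm i) : α) with hf
  have hfinj : Function.Injective f := by
    intro i j hij
    have := Subtype.coe_injective hij
    have := T.equivFin.symm.injective this
    simpa [Fin.ext_iff] using this
  have hfT : ∀ i, f i ∈ T := fun i => (T.equivFin.symm (Fin.cast hT.symm i)).2
  obtain ⟨S₀, hS₀, c, hmono⟩ := h (fun e => χ (e.image f))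
  refine ⟨S₀.image f, ?_, ?_, c, ?_⟩
  · intro x hx; obtain ⟨i, _, rfl⟩ := mem_image.1 hx; exact hfT i
  · rw [card_image_of_injective _ hfinj, hS₀]
  · intro e he hek
    obtain ⟨u, hu, rfl⟩ := subset_image_iff.1 he
    rw [hmono u hu (by rwa [card_image_of_injective _ hfinj] at hek)]

private lemma rp_mono {k q n N M : ℕ} (h : RP k q n N) (hNM : N ≤ M) : RP k q n M := by
  intro χ
  obtain ⟨T, _, hT⟩ := exists_subset_card_eq
    (show N ≤ (univ : Finset (Fin M)).card by simpa using hNM)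
  obtain ⟨S, _, hS⟩ := rp_transfer h T hT χ
  exact ⟨S, hS⟩

private lemma rp_one (q n : ℕ) (hq : 1 ≤ q) : RP 1 q n (q * n) := by
  intro χ
  classical
  have hmaps : ∀ x ∈ (univ : Finset (Fin (q * n))), χ {x} ∈ (univ : Finset (Fin q)) :=
    fun x _ => mem_univ _
  have hne : (univ : Finset (Fin q)).Nonempty := by
    rw [← card_pos]; simpa using (show 0 < q by omega)
  obtain ⟨b, _, hb⟩ := exists_le_card_fiber_of_mul_le_card_of_maps_to hmaps hne
    (n := n) (by simp)
  obtain ⟨S, hS, hScard⟩ := exists_subset_card_eq hb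
  refine ⟨S, hScard, b, ?_⟩
  intro e he hek
  obtain ⟨x, rfl⟩ := card_eq_one.1 hek
  exact ((mem_filter.1 (hS (he (mem_singleton_self x)))).2)
private def gaux (Q : ℕ) : ℕ → ℕ
  | 0 => 1
  | (j+1) => Q * gaux Q j + 1

private lemma gaux_pos (Q j : ℕ) : 0 < gaux Q j := by
  cases j with
  | zero => simp [gaux]
  | succ j => simp [gaux]

private lemma rp_step {k q n m : ℕ} (hk : 1 ≤ k) (hm : RP k q n m) :
    ∃ N : ℕ, RP (k + 1) q n N := by
  classical
  set Q := 2 ^ (2 ^ (m + 1) * q) with hQ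
  refine ⟨gaux Q (m + 1), ?_⟩
  intro χ
  -- master invariant
  have inv : ∀ i, i ≤ m + 1 →
      gaux Q (m + 1 - i) ≤ (states k χ i).2.card ∧ (states k χ i).1.card ≤ i := by
    intro i
    induction i with
    | zero =>
      intro _
      constructor
      · have h2 : (states k χ 0).2 = (univ : Finset (Fin (gaux Q (m + 1)))) := by rw [states]
        rw [h2, Nat.sub_zero, card_univ, Fintype.card_fin]
      · have h1 : (states k χ 0).1 = (∅ : Finset (Fin (gaux Q (m + 1)))) := by rw [states]
        simp [h1]
    | succ i ih =>
      intro hi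
      obtain ⟨h1, h2⟩ := ih (by omega)
      have hAne : (states k χ i).2.Nonempty :=
        card_pos.1 (lt_of_lt_of_le (gaux_pos _ _) h1)
      obtain ⟨hP', hsub, hhom, hcard⟩ := states_succ k χ i hAne
      have hPcard : (insert ((states k χ i).2.min' hAne) (states k χ i).1).card ≤ i + 1 :=
        le_trans (card_insert_le _ _) (by omega)
      constructor
      · set T := 2 ^ ((insert ((states k χ i).2.min' hAne) (states k χ i).1).card.choose k * q)
          with hT
        have hTpos : 0 < T := by positivity
        have hTQ : T ≤ Q := by
          apply Nat.pow_le_pow_right (by norm_num)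
          apply Nat.mul_le_mul_right
          calc (insert ((states k χ i).2.min' hAne) (states k χ i).1).card.choose k
              ≤ 2 ^ (insert ((states k χ i).2.min' hAne) (states k χ i).1).card :=
                choose_le_two_pow _ _
            _ ≤ 2 ^ (m + 1) := Nat.pow_le_pow_right (by norm_num) (by omega)
        have harith : m + 1 - i = (m - i) + 1 := by omega
        rw [harith] at h1
        have hgeq : gaux Q ((m - i) + 1) = Q * gaux Q (m - i) + 1 := rfl
        have hgoal : m + 1 - (i + 1) = m - i := by omega
        rw [hgoal]
        calc gaux Q (m - i) = (T * gaux Q (m - i)) / T :=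
              (Nat.mul_div_cancel_left _ hTpos).symm
          _ ≤ (Q * gaux Q (m - i)) / T :=
              Nat.div_le_div_right (Nat.mul_le_mul_right _ hTQ)
          _ ≤ ((states k χ i).2.card - 1) / T := Nat.div_le_div_right (by omega)
          _ ≤ (states k χ (i+1)).2.card := hcard
      · rw [hP']
        exact hPcard
  have hANe : ∀ i, i ≤ m + 1 → (states k χ i).2.Nonempty :=
    fun i hi => card_pos.1 (lt_of_lt_of_le (gaux_pos _ _) (inv i hi).1)
  have hN0 : 0 < gaux Q (m + 1) := gaux_pos _ _
  set a : ℕ → Fin (gaux Q (m + 1)) := fun i =>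
    if h : (states k χ i).2.Nonempty then (states k χ i).2.min' h else ⟨0, hN0⟩ with ha
  have haA : ∀ i, i ≤ m + 1 → a i ∈ (states k χ i).2 := by
    intro i hi
    rw [ha]
    simp only
    rw [dif_pos (hANe i hi)]
    exact min'_mem _ _
  have haval : ∀ i, (hi : i ≤ m + 1) → a i = (states k χ i).2.min' (hANe i hi) := by
    intro i hi
    rw [ha]
    simp only
    rw [dif_pos (hANe i hi)]
  have hPsucc : ∀ i, i ≤ m → (states k χ (i+1)).1 = insert (a i) (states k χ i).1 := by
    intro i hi
    rw [(states_succ k χ i (hANe i (by omega))).1, haval i (by omega)]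
  have hPeq : ∀ i, i ≤ m + 1 → (states k χ i).1 = (range i).image a := by
    intro i
    induction i with
    | zero =>
      intro _
      rw [states]
      simp
    | succ i ih =>
      intro hi
      rw [hPsucc i (by omega), ih (by omega), range_add_one, image_insert]
  have hlt : ∀ i j, i < j → j ≤ m + 1 → a i < a j := by
    intro i j hij hj
    have hsub := (states_succ k χ i (hANe i (by omega))).2.1
    have haj : a j ∈ (states k χ (i+1)).2 :=
      states_chain' k χ (by omega : i + 1 ≤ j) (haA j hj)
    have := hsub haj
    rw [mem_erase] at this
    rw [haval i (by omega)]
    exact lt_of_le_of_ne (min'_le _ _ this.2) (fun h => this.1 (h.symm ▸ rfl))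
  set av : Fin m → Fin (gaux Q (m + 1)) := fun j => a j.val with hav
  have havinj : Function.Injective av := by
    intro x y hxy
    rcases lt_trichotomy x.val y.val with h | h | h
    · have := y.isLt
      exact absurd hxy (ne_of_lt (hlt _ _ h (by omega)))
    · exact Fin.ext h
    · have := x.isLt
      exact absurd hxy.symm (ne_of_lt (hlt _ _ h (by omega)))
  obtain ⟨S₀, hS₀card, c, hmono⟩ := hm (fun I => χ (insert (a m) (I.image av)))
  refine ⟨S₀.image av, by rw [card_image_of_injective _ havinj, hS₀card], c, ?_⟩
  intro f hf hfcard
  obtain ⟨I, hIS₀, rfl⟩ := subset_image_iff.1 hf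
  have hIcard : I.card = k + 1 := by rwa [card_image_of_injective _ havinj] at hfcard
  have hIne : I.Nonempty := card_pos.1 (by omega)
  have hj₀m : (I.max' hIne).val < m := (I.max' hIne).isLt
  have hj₀1 : 1 ≤ (I.max' hIne).val := by
    by_contra hcon
    push_neg at hcon
    have hone : ∀ x ∈ I, x = I.max' hIne := by
      intro x hx
      have h1 := I.le_max' x hx
      have h2 : x.val ≤ (I.max' hIne).val := h1
      exact Fin.ext (by omega)
    have hsub1 : I ⊆ {I.max' hIne} := fun x hx => mem_singleton.2 (hone x hx)
    have := card_le_card hsub1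
    rw [card_singleton, hIcard] at this
    omega
  have hI'card : (I.erase (I.max' hIne)).card = k := by
    rw [card_erase_of_mem (I.max'_mem hIne), hIcard]
    omega
  have hecard : ((I.erase (I.max' hIne)).image av).card = k := by
    rw [card_image_of_injective _ havinj]
    exact hI'card
  have hfe : I.image av = insert (a (I.max' hIne).val) ((I.erase (I.max' hIne)).image av) := by
    conv_lhs => rw [← insert_erase (I.max'_mem hIne)]
    rw [image_insert]
  have heP : (I.erase (I.max' hIne)).image av ⊆ (states k χ (I.max' hIne).val).1 := by
    rw [hPeq (I.max' hIne).val (by omega)]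
    intro x hx
    obtain ⟨j, hj, rfl⟩ := mem_image.1 hx
    refine mem_image.2 ⟨j.val, mem_range.2 ?_, rfl⟩
    have h1 : j.val ≤ (I.max' hIne).val := I.le_max' j (mem_of_mem_erase hj)
    have h2 : j ≠ I.max' hIne := ne_of_mem_erase hj
    have h3 : j.val ≠ (I.max' hIne).val := fun h => h2 (Fin.ext h)
    omega
  obtain ⟨i0, hi0⟩ : ∃ i0, (I.max' hIne).val = i0 + 1 := ⟨(I.max' hIne).val - 1, by omega⟩
  have hi0m : i0 + 1 ≤ m := by omega
  have hAnei0 : (states k χ i0).2.Nonempty := hANe i0 (by omega)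
  obtain ⟨hP', _, hhom, _⟩ := states_succ k χ i0 hAnei0
  have h1 : a (I.max' hIne).val ∈ (states k χ (i0 + 1)).2 := by
    rw [← hi0]
    exact haA _ (by omega)
  have h2 : a m ∈ (states k χ (i0 + 1)).2 :=
    states_chain' k χ (by omega : i0 + 1 ≤ m) (haA m (by omega))
  have heP' : (I.erase (I.max' hIne)).image av ⊆
      insert ((states k χ i0).2.min' hAnei0) (states k χ i0).1 := by
    rw [← hP', ← hi0]
    exact heP
  have hkey := hhom _ h1 _ h2 _ heP' hecard
  have hI'sub : I.erase (I.max' hIne) ⊆ S₀ := (erase_subset _ _).trans hIS₀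
  calc χ (I.image av) = χ (insert (a (I.max' hIne).val) ((I.erase (I.max' hIne)).image av)) := by
        rw [hfe]
    _ = χ (insert (a m) ((I.erase (I.max' hIne)).image av)) := hkey
    _ = c := hmono _ hI'sub hI'card

private lemma rp_exists (k q n : ℕ) (hk : 1 ≤ k) (hq : 1 ≤ q) : ∃ N, RP k q n N := by
  obtain ⟨j, rfl⟩ : ∃ j, k = j + 1 := ⟨k - 1, by omega⟩
  induction j with
  | zero => exact ⟨q * n, rp_one q n hq⟩
  | succ j ih =>
    obtain ⟨m, hm⟩ := ih (by omega)
    exact rp_step (by omega) hm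
private lemma card_supersets {N t R : ℕ} (S : Finset (Fin N)) (hS : S.card = t) (htR : t ≤ R) :
    ((powersetCard R (univ : Finset (Fin N))).filter (fun T => S ⊆ T)).card
      = (N - t).choose (R - t) := by
  classical
  have hcompl : ((univ : Finset (Fin N)) \ S).card = N - t := by
    rw [card_sdiff_of_subset (subset_univ S), card_univ, Fintype.card_fin, hS]
  have hbij : ((powersetCard R (univ : Finset (Fin N))).filter (fun T => S ⊆ T)).card
      = (powersetCard (R - t) ((univ : Finset (Fin N)) \ S)).card := by
    apply card_bij' (fun T _ => T \ S) (fun U _ => U ∪ S)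
    · intro T hT
      obtain ⟨hT1, hT2⟩ := mem_filter.1 hT
      obtain ⟨_, hT3⟩ := mem_powersetCard.1 hT1
      exact mem_powersetCard.2 ⟨sdiff_subset_sdiff (subset_univ T) Subset.rfl,
        by rw [card_sdiff_of_subset hT2, hT3, hS]⟩
    · intro U hU
      obtain ⟨hU1, hU2⟩ := mem_powersetCard.1 hU
      have hdisj : Disjoint U S := disjoint_left.2 (fun x hx =>
        (mem_sdiff.1 (hU1 hx)).2)
      refine mem_filter.2 ⟨mem_powersetCard.2 ⟨subset_univ _, ?_⟩, subset_union_right⟩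
      rw [card_union_of_disjoint hdisj, hU2, hS]
      omega
    · intro T hT
      exact sdiff_union_of_subset (mem_filter.1 hT).2
    · intro U hU
      have hdisj : Disjoint U S := disjoint_left.2 (fun x hx =>
        (mem_sdiff.1 ((mem_powersetCard.1 hU).1 hx)).2)
      exact union_sdiff_cancel_right hdisj
  rw [hbij, card_powersetCard, hcompl]

/-- Supersaturation: if `R = r_k(t; q)` and `N ≥ R`, then for every `q`-coloring of the
`k`-subsets of an `N`-set there is a color `c` such that the number of `t`-subsets all of
whose `k`-subsets get color `c` is at least `binom(N,R) / (q * binom(N-t, R-t))`. -/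
theorem supersaturation (k q t : ℕ) (hk : 2 ≤ k) (hq : 1 ≤ q) (ht : k ≤ t)
    (R N : ℕ) (hR : R = cliqueRamsey k q t) (hN : R ≤ N)
    (χ : Finset (Fin N) → Fin q) :
    ∃ c : Fin q,
      (N.choose R : ℝ) / (q * ((N - t).choose (R - t) : ℝ)) ≤
        (Nat.card {S : Finset (Fin N) // S.card = t ∧ ∀ e ⊆ S, e.card = k → χ e = c} : ℝ) := by
  classical
  obtain ⟨N₀, hN₀⟩ := rp_exists k q t (by omega) hq
  have hRmem : RP k q t R := by
    rw [hR]
    have hne : {N : ℕ | ∀ χ : Finset (Fin N) → Fin q,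
        ∃ S : Finset (Fin N), S.card = t ∧ ∃ c : Fin q,
          ∀ e ⊆ S, e.card = k → χ e = c}.Nonempty := ⟨N₀, hN₀⟩
    exact Nat.sInf_mem hne
  have hRt : t ≤ R := by
    obtain ⟨S, hScard, -⟩ := hRmem (fun _ => ⟨0, by omega⟩)
    calc t = S.card := hScard.symm
      _ ≤ (univ : Finset (Fin R)).card := card_le_univ S
      _ = R := by rw [card_univ, Fintype.card_fin]
  set G : Fin q → Finset (Finset (Fin N)) := fun c =>
    univ.filter (fun S => S.card = t ∧ ∀ e ⊆ S, e.card = k → χ e = c) with hG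
  have hcover : ∀ T ∈ powersetCard R (univ : Finset (Fin N)), ∃ c, ∃ S ∈ G c, S ⊆ T := by
    intro T hT
    have hTcard : T.card = R := (mem_powersetCard.1 hT).2
    obtain ⟨S, hST, hScard, c, hmono⟩ := rp_transfer hRmem T hTcard χ
    exact ⟨c, S, mem_filter.2 ⟨mem_univ _, hScard, hmono⟩, hST⟩
  have hcount : N.choose R ≤ ∑ c : Fin q, (G c).card * (N - t).choose (R - t) := by
    calc N.choose R = (powersetCard R (univ : Finset (Fin N))).card := by
          rw [card_powersetCard, card_univ, Fintype.card_fin]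
      _ ≤ ∑ T ∈ powersetCard R (univ : Finset (Fin N)),
            ∑ c : Fin q, ((G c).filter (· ⊆ T)).card := by
          rw [card_eq_sum_ones]
          apply sum_le_sum
          intro T hT
          obtain ⟨c, S, hSG, hST⟩ := hcover T hT
          calc 1 ≤ ((G c).filter (· ⊆ T)).card :=
                card_pos.2 ⟨S, mem_filter.2 ⟨hSG, hST⟩⟩
            _ ≤ ∑ c : Fin q, ((G c).filter (· ⊆ T)).card :=
                single_le_sum (f := fun c => ((G c).filter (· ⊆ T)).card)
                  (fun _ _ => Nat.zero_le _) (mem_univ c)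
      _ = ∑ c : Fin q, ∑ T ∈ powersetCard R (univ : Finset (Fin N)),
            ((G c).filter (· ⊆ T)).card := sum_comm
      _ = ∑ c : Fin q, ∑ S ∈ G c,
            ((powersetCard R (univ : Finset (Fin N))).filter (fun T => S ⊆ T)).card := by
          apply sum_congr rfl
          intro c _
          simp_rw [card_filter]
          exact sum_comm
      _ = ∑ c : Fin q, (G c).card * (N - t).choose (R - t) := by
          apply sum_congr rfl
          intro c _
          rw [sum_congr rfl (fun S hS => card_supersets S (mem_filter.1 hS).2.1 hRt),
            sum_const, smul_eq_mul]
  have hmax : ∃ c : Fin q, N.choose R ≤ q * ((G c).card * (N - t).choose (R - t)) := by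
    have hne : (univ : Finset (Fin q)).Nonempty := ⟨⟨0, by omega⟩, mem_univ _⟩
    have hsum : ∑ _c : Fin q, N.choose R ≤
        ∑ c : Fin q, q * ((G c).card * (N - t).choose (R - t)) := by
      rw [sum_const, card_univ, Fintype.card_fin, ← mul_sum]
      exact Nat.mul_le_mul_left q hcount |>.trans_eq' (by rw [smul_eq_mul])
    obtain ⟨c, _, hc⟩ := exists_le_of_sum_le hne hsum
    exact ⟨c, hc⟩
  obtain ⟨c, hc⟩ := hmax
  refine ⟨c, ?_⟩
  have hcard_eq : Nat.card {S : Finset (Fin N) // S.card = t ∧ ∀ e ⊆ S, e.card = k → χ e = c}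
      = (G c).card := by
    rw [Nat.card_eq_fintype_card, hG]
    convert Fintype.card_subtype _
  rw [hcard_eq]
  have hCC : 0 < (N - t).choose (R - t) := Nat.choose_pos (by omega)
  have hden : (0:ℝ) < q * ((N - t).choose (R - t) : ℝ) := by
    have h1 : (0:ℝ) < q := by exact_mod_cast hq
    have h2 : (0:ℝ) < ((N - t).choose (R - t) : ℝ) := by exact_mod_cast hCC
    exact mul_pos h1 h2
  rw [div_le_iff₀ hden]
  calc (N.choose R : ℝ) ≤ (q * ((G c).card * (N - t).choose (R - t)) : ℕ) := by
        exact_mod_cast hc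
    _ = (G c).card * (q * ((N - t).choose (R - t) : ℝ)) := by push_cast; ring
end
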